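/- arXiv:1412.5553 — 6 statements merged into one kernel-verified Lean document; each statement's English description precedes it below -/
import Mathlib

section
/- Let G be an irreducible rate matrix on the finite state space 𝒳 = {1,…,d} and let p(·), q(·) : [0,∞) → 𝒫(𝒳) be solutions of the linear forward equation r'(t) = r(t)G with initial conditions p(0), q(0) ∈ 𝒫(𝒳). Then for every t > 0 all components of p(t) and q(t) are strictly positive, and d/dt R(p(t)‖q(t)) = − Σ_{x,y ∈ 𝒳, x ≠ y} ℓ( p_y(t) q_x(t) / (p_x(t) q_y(t)) ) · p_x(t) · (q_y(t)/q_x(t)) · G_{y,x} ≤ 0, where ℓ(z) = z log z − z + 1. -/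
open scoped BigOperators

/-- Relative entropy `R(p‖q) = ∑ x, p x * log (p x / q x)` of probability
vectors on `Fin d` (with the convention `0 log 0 = 0`, as given by Lean's
`Real.log 0 = 0` and `x / 0 = 0`). -/
noncomputable def relEnt {d : ℕ} (p q : Fin d → ℝ) : ℝ :=
  ∑ x, p x * Real.log (p x / q x)

/-- `G` is a rate matrix: nonnegative off-diagonal entries and zero row sums. -/
def IsRateMatrix {d : ℕ} (G : Matrix (Fin d) (Fin d) ℝ) : Prop :=
  (∀ x y, x ≠ y → 0 ≤ G x y) ∧ (∀ x, ∑ y, G x y = 0)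

/-- `G` is irreducible: the directed graph with an edge from `x` to `y`
whenever `x ≠ y` and `G x y > 0` is strongly connected. -/
def IsIrreducibleRateMatrix {d : ℕ} (G : Matrix (Fin d) (Fin d) ℝ) : Prop :=
  ∀ x y : Fin d, x ≠ y → Relation.TransGen (fun a b => a ≠ b ∧ 0 < G a b) x y

/-- `p` solves the linear forward equation `r'(t) = r(t) G` on `[0,∞)`,
with values in the simplex of probability vectors. -/
def SolvesForwardEquation {d : ℕ} (G : Matrix (Fin d) (Fin d) ℝ)
    (p : ℝ → Fin d → ℝ) : Prop :=
  (∀ t : ℝ, 0 ≤ t → p t ∈ stdSimplex ℝ (Fin d)) ∧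
  (∀ t : ℝ, 0 ≤ t → ∀ x, HasDerivAt (fun s => p s x) (∑ y, p t y * G y x) t)

/-- The function `ℓ(z) = z log z - z + 1`. -/
noncomputable def ell (z : ℝ) : ℝ := z * Real.log z - z + 1

open Finset

section Aux

variable {d : ℕ} {G : Matrix (Fin d) (Fin d) ℝ} {p : ℝ → Fin d → ℝ}

/-- Splitting off the diagonal term of the drift. -/
lemma offdiag_sum (u : ℝ) (x : Fin d) :
    (∑ y, p u y * G y x) - p u x * G x x = ∑ y ∈ univ.erase x, p u y * G y x := by
  rw [← Finset.add_sum_erase univ (fun y => p u y * G y x) (mem_univ x)]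
  ring

lemma offdiag_nonneg (hG : IsRateMatrix G) (hp : SolvesForwardEquation G p)
    {u : ℝ} (hu : 0 ≤ u) (x : Fin d) :
    0 ≤ ∑ y ∈ univ.erase x, p u y * G y x :=
  Finset.sum_nonneg fun y hy =>
    mul_nonneg ((hp.1 u hu).1 y) (hG.1 y x (Finset.mem_erase.1 hy).1)

/-- Derivative of the integrating-factor transformed coordinate. -/
lemma gDeriv (hp : SolvesForwardEquation G p) (x : Fin d) {u : ℝ} (hu : 0 ≤ u) :
    HasDerivAt (fun v => p v x * Real.exp (-G x x * v))
      (Real.exp (-G x x * u) * ∑ y ∈ univ.erase x, p u y * G y x) u := by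
  have h1 : HasDerivAt (fun v : ℝ => Real.exp (-G x x * v))
      (Real.exp (-G x x * u) * (-G x x)) u := by
    simpa using ((hasDerivAt_id u).const_mul (-G x x)).exp
  have h2 := (hp.2 u hu x).fun_mul h1
  refine h2.congr_deriv ?_
  rw [← offdiag_sum u x]
  ring

lemma entry_mono (hG : IsRateMatrix G) (hp : SolvesForwardEquation G p) (x : Fin d)
    {s t : ℝ} (hs : 0 ≤ s) (hst : s ≤ t) :
    p s x * Real.exp (-G x x * s) ≤ p t x * Real.exp (-G x x * t) := by
  have hmem : Set.Icc s t ⊆ Set.Ici (0 : ℝ) := fun u hu => le_trans hs hu.1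
  have hmono : MonotoneOn (fun v => p v x * Real.exp (-G x x * v)) (Set.Icc s t) := by
    apply monotoneOn_of_deriv_nonneg (convex_Icc s t)
    · intro u hu
      exact ((gDeriv hp x (hmem hu)).continuousAt).continuousWithinAt
    · intro u hu
      have hu0 : 0 ≤ u := hmem (interior_subset hu)
      exact ((gDeriv hp x hu0).differentiableAt).differentiableWithinAt
    · intro u hu
      have hu0 : 0 ≤ u := hmem (interior_subset hu)
      rw [(gDeriv hp x hu0).deriv]
      exact mul_nonneg (Real.exp_pos _).le (offdiag_nonneg hG hp hu0 x)
  exact hmono ⟨le_rfl, hst⟩ ⟨hst, le_rfl⟩ hst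

lemma entry_pos_persist (hG : IsRateMatrix G) (hp : SolvesForwardEquation G p) (x : Fin d)
    {s t : ℝ} (hs : 0 ≤ s) (hst : s ≤ t) (h : 0 < p s x) : 0 < p t x := by
  have hm := entry_mono hG hp x hs hst
  nlinarith [Real.exp_pos (-G x x * s), Real.exp_pos (-G x x * t),
    mul_pos h (Real.exp_pos (-G x x * s))]

lemma entry_spread (hG : IsRateMatrix G) (hp : SolvesForwardEquation G p)
    {x y : Fin d} (hyx : y ≠ x) (hGyx : 0 < G y x) {s t : ℝ}
    (hs : 0 ≤ s) (hst : s < t) (hy : 0 < p s y) : 0 < p t x := by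
  have hypos : ∀ u, s ≤ u → 0 < p u y := fun u hu => entry_pos_persist hG hp y hs hu hy
  have hstrict : StrictMonoOn (fun v => p v x * Real.exp (-G x x * v)) (Set.Icc s t) := by
    apply strictMonoOn_of_deriv_pos (convex_Icc s t)
    · intro u hu
      exact ((gDeriv hp x (le_trans hs hu.1)).continuousAt).continuousWithinAt
    · intro u hu
      rw [interior_Icc] at hu
      have hu0 : 0 ≤ u := le_trans hs hu.1.le
      rw [(gDeriv hp x hu0).deriv]
      apply mul_pos (Real.exp_pos _)
      apply Finset.sum_pos'
      · intro z hz
        exact mul_nonneg ((hp.1 u hu0).1 z) (hG.1 z x (Finset.mem_erase.1 hz).1)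
      · exact ⟨y, Finset.mem_erase.2 ⟨hyx, mem_univ y⟩, mul_pos (hypos u hu.1.le) hGyx⟩
  have h1 := hstrict (Set.mem_Icc.2 ⟨le_rfl, hst.le⟩) (Set.mem_Icc.2 ⟨hst.le, le_rfl⟩) hst
  have h0 : 0 ≤ p s x * Real.exp (-G x x * s) :=
    mul_nonneg ((hp.1 s hs).1 x) (Real.exp_pos _).le
  have h1' : p s x * Real.exp (-G x x * s) < p t x * Real.exp (-G x x * t) := h1
  nlinarith [Real.exp_pos (-G x x * t), h1', h0]

/-- Every coordinate of a solution is strictly positive at positive times. -/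
lemma sol_pos (hG : IsRateMatrix G) (hGirr : IsIrreducibleRateMatrix G)
    (hp : SolvesForwardEquation G p) {t : ℝ} (ht : 0 < t) (x : Fin d) : 0 < p t x := by
  obtain ⟨x0, hx0⟩ : ∃ x0, 0 < p 0 x0 := by
    by_contra h
    push_neg at h
    have hle : (∑ z, p 0 z) ≤ 0 := Finset.sum_nonpos fun z _ => h z
    rw [(hp.1 0 le_rfl).2] at hle
    linarith
  by_cases hxx : x = x0
  · subst hxx; exact entry_pos_persist hG hp x le_rfl ht.le hx0
  · have hpath := hGirr x0 x fun h => hxx h.symm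
    have key : ∀ z : Fin d, Relation.TransGen (fun a b => a ≠ b ∧ 0 < G a b) x0 z →
        ∀ u : ℝ, 0 < u → 0 < p u z := by
      intro z hz
      induction hz with
      | single h =>
        intro u hu
        have h2 : 0 < p (u / 2) x0 :=
          entry_pos_persist hG hp x0 le_rfl (half_pos hu).le hx0
        exact entry_spread hG hp h.1 h.2 (half_pos hu).le (half_lt_self hu) h2
      | tail _ h ih =>
        intro u hu
        have h2 := ih (u / 2) (half_pos hu)
        exact entry_spread hG hp h.1 h.2 (half_pos hu).le (half_lt_self hu) h2
    exact key x hpath t ht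

end Aux

section Algebra

variable {d : ℕ}

/-- The key algebraic identity between the naive derivative of the relative
entropy and the `ℓ`-form. -/
lemma algebra_key (G : Matrix (Fin d) (Fin d) ℝ) (hG : IsRateMatrix G)
    (a b : Fin d → ℝ) (ha : ∀ x, 0 < a x) (hb : ∀ x, 0 < b x) :
    ∑ x, ((∑ y, a y * G y x) * (Real.log (a x) - Real.log (b x)) +
      ((∑ y, a y * G y x) - a x * (∑ y, b y * G y x) / b x)) =
    -∑ x, ∑ y ∈ univ.filter (fun y => y ≠ x),
        ell (a y * b x / (a x * b y)) * (a x * (b y / b x) * G y x) := by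
  set L : Fin d → ℝ := fun x => Real.log (a x) - Real.log (b x) with hL
  have hzero : ∀ c : Fin d → ℝ, ∑ x, ∑ y, c y * G y x = 0 := by
    intro c
    rw [Finset.sum_comm]
    refine Finset.sum_eq_zero fun y _ => ?_
    rw [← Finset.mul_sum, hG.2 y, mul_zero]
  have hM : ∑ x, ((∑ y, a y * G y x) * L x +
        ((∑ y, a y * G y x) - a x * (∑ y, b y * G y x) / b x)) =
      ∑ x, ∑ y, (a y * L x - a y * L y + a y - a x * b y / b x) * G y x := by
    have e1 : ∀ x, (∑ y, a y * G y x) * L x +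
        ((∑ y, a y * G y x) - a x * (∑ y, b y * G y x) / b x) =
        ∑ y, ((a y * L x + a y - a x * b y / b x) * G y x) := by
      intro x
      rw [Finset.sum_mul, Finset.mul_sum, Finset.sum_div, ← Finset.sum_sub_distrib,
        ← Finset.sum_add_distrib]
      exact Finset.sum_congr rfl fun y _ => by ring
    calc ∑ x, ((∑ y, a y * G y x) * L x +
          ((∑ y, a y * G y x) - a x * (∑ y, b y * G y x) / b x))
        = ∑ x, ∑ y, ((a y * L x + a y - a x * b y / b x) * G y x) :=
          Finset.sum_congr rfl fun x _ => e1 x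
      _ = ∑ x, ∑ y, (a y * L x - a y * L y + a y - a x * b y / b x) * G y x := by
          have hz := hzero fun y => a y * L y
          rw [← sub_zero (∑ x, ∑ y, ((a y * L x + a y - a x * b y / b x) * G y x)), ← hz,
            ← Finset.sum_sub_distrib]
          refine Finset.sum_congr rfl fun x _ => ?_
          rw [← Finset.sum_sub_distrib]
          exact Finset.sum_congr rfl fun y _ => by ring
  rw [hM]
  have e2 : ∀ x, ∑ y, (a y * L x - a y * L y + a y - a x * b y / b x) * G y x
      = -∑ y ∈ univ.filter (fun y => y ≠ x),
          ell (a y * b x / (a x * b y)) * (a x * (b y / b x) * G y x) := by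
    intro x
    rw [Finset.filter_ne',
      ← Finset.add_sum_erase univ
        (fun y => (a y * L x - a y * L y + a y - a x * b y / b x) * G y x) (mem_univ x)]
    have hdiag : (a x * L x - a x * L x + a x - a x * b x / b x) * G x x = 0 := by
      rw [mul_div_assoc, div_self (hb x).ne', mul_one]; ring
    rw [hdiag, zero_add, ← Finset.sum_neg_distrib]
    refine Finset.sum_congr rfl fun y hy => ?_
    have hyx : y ≠ x := (Finset.mem_erase.1 hy).1
    have hax := (ha x).ne'
    have hay := (ha y).ne'
    have hbx := (hb x).ne'
    have hby := (hb y).ne'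
    simp only [ell, hL]
    rw [Real.log_div (mul_ne_zero hay hbx) (mul_ne_zero hax hby),
      Real.log_mul hay hbx, Real.log_mul hax hby]
    field_simp
    ring
  rw [Finset.sum_congr rfl fun x _ => e2 x, Finset.sum_neg_distrib]

/-- Nonnegativity of `ℓ` on positive reals. -/
lemma ell_nonneg {z : ℝ} (hz : 0 < z) : 0 ≤ ell z := by
  have h1 : Real.log z⁻¹ ≤ z⁻¹ - 1 := Real.log_le_sub_one_of_pos (inv_pos.2 hz)
  rw [Real.log_inv] at h1
  have h2 : z * -Real.log z ≤ z * (z⁻¹ - 1) := mul_le_mul_of_nonneg_left h1 hz.le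
  have h3 : z * z⁻¹ = 1 := mul_inv_cancel₀ hz.ne'
  show 0 ≤ z * Real.log z - z + 1
  nlinarith

end Algebra

theorem relative_entropy_descent
    (d : ℕ) (hd : 2 ≤ d) (G : Matrix (Fin d) (Fin d) ℝ)
    (hG : IsRateMatrix G) (hGirr : IsIrreducibleRateMatrix G)
    (p q : ℝ → Fin d → ℝ)
    (hp : SolvesForwardEquation G p) (hq : SolvesForwardEquation G q) :
    ∀ t : ℝ, 0 < t →
      (∀ x, 0 < p t x) ∧ (∀ x, 0 < q t x) ∧
      HasDerivAt (fun s => relEnt (p s) (q s))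
        (-∑ x, ∑ y ∈ Finset.univ.filter (fun y => y ≠ x),
            ell (p t y * q t x / (p t x * q t y)) *
              (p t x * (q t y / q t x) * G y x)) t ∧
      (-∑ x, ∑ y ∈ Finset.univ.filter (fun y => y ≠ x),
          ell (p t y * q t x / (p t x * q t y)) *
            (p t x * (q t y / q t x) * G y x)) ≤ 0 := by
  intro t ht
  have hpt : ∀ x, 0 < p t x := sol_pos hG hGirr hp ht
  have hqt : ∀ x, 0 < q t x := sol_pos hG hGirr hq ht
  refine ⟨hpt, hqt, ?_, ?_⟩
  · -- the derivative computation
    have hder : ∀ x : Fin d, HasDerivAt (fun s => p s x * Real.log (p s x / q s x))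
        ((∑ y, p t y * G y x) * (Real.log (p t x) - Real.log (q t x)) +
          p t x * ((∑ y, p t y * G y x) / p t x - (∑ y, q t y * G y x) / q t x)) t := by
      intro x
      have hdp := hp.2 t ht.le x
      have hdq := hq.2 t ht.le x
      have hH := hdp.mul ((hdp.log (hpt x).ne').sub (hdq.log (hqt x).ne'))
      have h1 : ∀ᶠ s in nhds t, 0 < p s x :=
        hdp.continuousAt.eventually (eventually_gt_nhds (hpt x))
      have h2 : ∀ᶠ s in nhds t, 0 < q s x :=
        hdq.continuousAt.eventually (eventually_gt_nhds (hqt x))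
      have heq : (fun s => p s x * Real.log (p s x / q s x)) =ᶠ[nhds t]
          (fun s => p s x * (Real.log (p s x) - Real.log (q s x))) := by
        filter_upwards [h1, h2] with s hs1 hs2
        rw [Real.log_div hs1.ne' hs2.ne']
      exact hH.congr_of_eventuallyEq heq
    have hsum := HasDerivAt.fun_sum (u := (Finset.univ : Finset (Fin d))) fun x _ => hder x
    have hval : (∑ x, ((∑ y, p t y * G y x) * (Real.log (p t x) - Real.log (q t x)) +
          p t x * ((∑ y, p t y * G y x) / p t x - (∑ y, q t y * G y x) / q t x)))
        = -∑ x, ∑ y ∈ Finset.univ.filter (fun y => y ≠ x),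
            ell (p t y * q t x / (p t x * q t y)) *
              (p t x * (q t y / q t x) * G y x) := by
      rw [← algebra_key G hG (p t) (q t) hpt hqt]
      refine Finset.sum_congr rfl fun x _ => ?_
      have hax := (hpt x).ne'
      have hbx := (hqt x).ne'
      field_simp
    rw [← hval]
    exact hsum
  · -- the sign
    refine neg_nonpos_of_nonneg ?_
    refine Finset.sum_nonneg fun x _ => Finset.sum_nonneg fun y hy => ?_
    have hyx : y ≠ x := (Finset.mem_filter.1 hy).2
    refine mul_nonneg (ell_nonneg ?_) ?_
    · have := hpt x; have := hpt y; have := hqt x; have := hqt y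
      positivity
    · refine mul_nonneg (mul_nonneg (hpt x).le ?_) (hG.1 y x hyx)
      exact div_nonneg (hqt y).le (hqt x).le
end

section
/- Let G be an irreducible rate matrix on the finite state space 𝒳 = {1,…,d} and let p(·), q(·) : [0,∞) → 𝒫(𝒳) be solutions of the linear forward equation r'(t) = r(t)G. Then for every t > 0, d/dt R(p(t)‖q(t)) = 0 if and only if p(t) = q(t). -/
open scoped BigOperators

section Aux

variable {d : ℕ} {G : Matrix (Fin d) (Fin d) ℝ}

private lemma expDeriv {d : ℕ} {G : Matrix (Fin d) (Fin d) ℝ} {p : ℝ → Fin d → ℝ}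
    (hp : SolvesForwardEquation G p) (C : ℝ) (x : Fin d) {v : ℝ} (hv : 0 ≤ v) :
    HasDerivAt (fun w => Real.exp (C * w) * p w x)
      (Real.exp (C * v) * (C * p v x + ∑ y, p v y * G y x)) v := by
  have h1 : HasDerivAt (fun w : ℝ => Real.exp (C * w)) (Real.exp (C * v) * C) v := by
    have := (Real.hasDerivAt_exp (C * v)).comp v ((hasDerivAt_id v).const_mul C)
    simpa [mul_comm, mul_one, Function.comp_def] using this
  have h3 := h1.fun_mul (hp.2 v hv x)
  exact h3.congr_deriv (by ring)

private lemma persist (hG : IsRateMatrix G) {p : ℝ → Fin d → ℝ}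
    (hp : SolvesForwardEquation G p)
    (x : Fin d) {s u : ℝ} (hs : 0 ≤ s) (hsu : s ≤ u) (hpos : 0 < p s x) :
    0 < p u x := by
  classical
  set C : ℝ := ∑ z, |G z z| with hCdef
  have hCz : ∀ z, 0 ≤ C + G z z := by
    intro z
    have h1 : |G z z| ≤ C :=
      Finset.single_le_sum (f := fun z => |G z z|) (fun i _ => abs_nonneg _) (Finset.mem_univ z)
    have h2 := neg_abs_le (G z z)
    linarith
  have hnn : ∀ v : ℝ, 0 ≤ v → ∀ z, 0 ≤ p v z := fun v hv z => (hp.1 v hv).1 z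
  have hdnn : ∀ v : ℝ, 0 ≤ v →
      0 ≤ Real.exp (C * v) * (C * p v x + ∑ y, p v y * G y x) := by
    intro v hv
    have h4 : p v x * G x x + ∑ y ∈ Finset.univ.erase x, p v y * G y x = ∑ y, p v y * G y x :=
      Finset.add_sum_erase _ (fun y => p v y * G y x) (Finset.mem_univ x)
    have h5 : (0:ℝ) ≤ ∑ y ∈ Finset.univ.erase x, p v y * G y x :=
      Finset.sum_nonneg fun y hy =>
        mul_nonneg (hnn v hv y) (hG.1 y x (Finset.ne_of_mem_erase hy))
    have h6 : 0 ≤ p v x * (C + G x x) := mul_nonneg (hnn v hv x) (hCz x)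
    have h7 : 0 ≤ C * p v x + ∑ y, p v y * G y x := by nlinarith
    exact mul_nonneg (Real.exp_pos _).le h7
  have hmono : MonotoneOn (fun w => Real.exp (C * w) * p w x) (Set.Ici s) := by
    apply monotoneOn_of_deriv_nonneg (convex_Ici s)
    · intro v hv
      exact (expDeriv hp C x (le_trans hs hv)).continuousAt.continuousWithinAt
    · intro v hv
      rw [interior_Ici] at hv
      exact (expDeriv hp C x (le_trans hs (le_of_lt hv))).differentiableAt.differentiableWithinAt
    · intro v hv
      rw [interior_Ici] at hv
      have h0v : (0:ℝ) ≤ v := le_trans hs (le_of_lt hv)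
      rw [(expDeriv hp C x h0v).deriv]
      exact hdnn v h0v
  have hle := hmono Set.self_mem_Ici (show u ∈ Set.Ici s from hsu) hsu
  have hgs : 0 < Real.exp (C * s) * p s x := mul_pos (Real.exp_pos _) hpos
  by_contra h
  push_neg at h
  have : Real.exp (C * u) * p u x ≤ 0 :=
    mul_nonpos_iff.mpr (Or.inl ⟨(Real.exp_pos _).le, h⟩)
  simp only at hle
  linarith

private lemma spread (hG : IsRateMatrix G) {p : ℝ → Fin d → ℝ}
    (hp : SolvesForwardEquation G p)
    {x y : Fin d} (hxy : x ≠ y) (hGxy : 0 < G x y)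
    {s u : ℝ} (hs : 0 ≤ s) (hsu : s < u) (hpos : 0 < p s x) : 0 < p u y := by
  classical
  set C : ℝ := ∑ z, |G z z| with hCdef
  have hCz : ∀ z, 0 ≤ C + G z z := by
    intro z
    have h1 : |G z z| ≤ C :=
      Finset.single_le_sum (f := fun z => |G z z|) (fun i _ => abs_nonneg _) (Finset.mem_univ z)
    have h2 := neg_abs_le (G z z)
    linarith
  have hnn : ∀ v : ℝ, 0 ≤ v → ∀ z, 0 ≤ p v z := fun v hv z => (hp.1 v hv).1 z
  have hmono : StrictMonoOn (fun w => Real.exp (C * w) * p w y) (Set.Icc s u) := by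
    apply strictMonoOn_of_deriv_pos (convex_Icc s u)
    · intro v hv
      exact (expDeriv hp C y (le_trans hs hv.1)).continuousAt.continuousWithinAt
    · intro v hv
      rw [interior_Icc] at hv
      have h0v : (0:ℝ) ≤ v := le_trans hs (le_of_lt hv.1)
      rw [(expDeriv hp C y h0v).deriv]
      have h4 : p v y * G y y + ∑ z ∈ Finset.univ.erase y, p v z * G z y = ∑ z, p v z * G z y :=
        Finset.add_sum_erase _ (fun z => p v z * G z y) (Finset.mem_univ y)
      have hx : x ∈ Finset.univ.erase y := Finset.mem_erase.mpr ⟨hxy, Finset.mem_univ x⟩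
      have h5 : p v x * G x y ≤ ∑ z ∈ Finset.univ.erase y, p v z * G z y :=
        Finset.single_le_sum (f := fun z => p v z * G z y)
          (fun z hz => mul_nonneg (hnn v h0v z) (hG.1 z y (Finset.ne_of_mem_erase hz))) hx
    -- p v x > 0 by persistence
      have hpvx : 0 < p v x := persist hG hp x hs (le_of_lt hv.1) hpos
      have h6 : 0 < p v x * G x y := mul_pos hpvx hGxy
      have h7 : 0 ≤ p v y * (C + G y y) := mul_nonneg (hnn v h0v y) (hCz y)
      have h8 : 0 < C * p v y + ∑ z, p v z * G z y := by nlinarith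
      exact mul_pos (Real.exp_pos _) h8
  have hlt := hmono (Set.left_mem_Icc.mpr hsu.le) (Set.right_mem_Icc.mpr hsu.le) hsu
  simp only at hlt
  have hgs : 0 ≤ Real.exp (C * s) * p s y := mul_nonneg (Real.exp_pos _).le (hnn s hs y)
  by_contra h
  push_neg at h
  have : Real.exp (C * u) * p u y ≤ 0 :=
    mul_nonpos_iff.mpr (Or.inl ⟨(Real.exp_pos _).le, h⟩)
  linarith

private lemma pos_at (hG : IsRateMatrix G) (hGirr : IsIrreducibleRateMatrix G)
    {p : ℝ → Fin d → ℝ} (hp : SolvesForwardEquation G p)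
    {t : ℝ} (ht : 0 < t) (y : Fin d) : 0 < p t y := by
  obtain ⟨x0, hx0⟩ : ∃ x0, 0 < p 0 x0 := by
    by_contra h
    push_neg at h
    have h1 : ∑ z, p 0 z ≤ 0 := Finset.sum_nonpos fun z _ => h z
    have h2 := (hp.1 0 le_rfl).2
    rw [h2] at h1
    linarith
  have key : ∀ z, Relation.TransGen (fun a b => a ≠ b ∧ 0 < G a b) x0 z →
      ∀ u : ℝ, 0 < u → 0 < p u z := by
    intro z hz
    induction hz with
    | single h => exact fun u hu => spread hG hp h.1 h.2 le_rfl hu hx0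
    | tail hb e ih =>
        exact fun u hu =>
          spread hG hp e.1 e.2 (by linarith : (0:ℝ) ≤ u/2) (by linarith)
            (ih (u/2) (by linarith))
  by_cases hzy : y = x0
  · subst hzy
    exact persist hG hp y le_rfl ht.le hx0
  · exact key y (hGirr x0 y (Ne.symm hzy)) t ht

end Aux

/-- For an irreducible rate matrix `G` and two solutions of the linear
forward equation, at any time `t > 0` the derivative of
`t ↦ R(p(t)‖q(t))` vanishes if and only if `p(t) = q(t)`. -/
theorem relative_entropy_derivative_zero_iff
    (d : ℕ) (hd : 2 ≤ d) (G : Matrix (Fin d) (Fin d) ℝ)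
    (hG : IsRateMatrix G) (hGirr : IsIrreducibleRateMatrix G)
    (p q : ℝ → Fin d → ℝ)
    (hp : SolvesForwardEquation G p) (hq : SolvesForwardEquation G q) :
    ∀ t : ℝ, 0 < t → ∀ D : ℝ,
      HasDerivAt (fun s => relEnt (p s) (q s)) D t →
      (D = 0 ↔ p t = q t) := by
  intro t ht D hD
  classical
  have hppos : ∀ x, 0 < p t x := pos_at hG hGirr hp ht
  have hqpos : ∀ x, 0 < q t x := pos_at hG hGirr hq ht
  set P' : Fin d → ℝ := fun x => ∑ y, p t y * G y x with hP'def
  set Q' : Fin d → ℝ := fun x => ∑ y, q t y * G y x with hQ'def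
  set a : Fin d → ℝ := fun x => p t x / q t x with hadef
  have hapos : ∀ x, 0 < a x := fun x => div_pos (hppos x) (hqpos x)
  have hPa : ∀ x, p t x = q t x * a x := by
    intro x
    simp only [hadef]
    rw [mul_comm, div_mul_cancel₀ _ (hqpos x).ne']
  -- eventual positivity near t
  have hev : ∀ᶠ s in nhds t, ∀ x : Fin d, 0 < p s x ∧ 0 < q s x := by
    rw [Filter.eventually_all]
    intro x
    have hc : ContinuousAt (fun s => p s x) t := (hp.2 t ht.le x).continuousAt
    have hc' : ContinuousAt (fun s => q s x) t := (hq.2 t ht.le x).continuousAt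
    exact (hc.eventually (eventually_gt_nhds (hppos x))).and
      (hc'.eventually (eventually_gt_nhds (hqpos x)))
  -- derivative computation
  have hterm : ∀ x : Fin d,
      HasDerivAt (fun s => p s x * (Real.log (p s x) - Real.log (q s x)))
        (P' x * (Real.log (p t x) - Real.log (q t x))
          + p t x * (P' x / p t x - Q' x / q t x)) t :=
    fun x => (hp.2 t ht.le x).mul
      (((hp.2 t ht.le x).log (hppos x).ne').sub ((hq.2 t ht.le x).log (hqpos x).ne'))
  have hD0 : HasDerivAt (fun s => relEnt (p s) (q s))
      (∑ x, (P' x * (Real.log (p t x) - Real.log (q t x))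
        + p t x * (P' x / p t x - Q' x / q t x))) t := by
    refine (HasDerivAt.fun_sum fun x _ => hterm x).congr_of_eventuallyEq ?_
    filter_upwards [hev] with s hs
    simp only [relEnt]
    exact Finset.sum_congr rfl fun x _ => by rw [Real.log_div (hs x).1.ne' (hs x).2.ne']
  have hDval : D = ∑ x, (P' x * (Real.log (p t x) - Real.log (q t x))
      + p t x * (P' x / p t x - Q' x / q t x)) := hD.unique hD0
  -- termwise simplification
  have hsimp : ∀ x, P' x * (Real.log (p t x) - Real.log (q t x))
      + p t x * (P' x / p t x - Q' x / q t x)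
      = P' x * Real.log (a x) + P' x - a x * Q' x := by
    intro x
    simp only [hadef]
    rw [Real.log_div (hppos x).ne' (hqpos x).ne']
    field_simp [(hppos x).ne', (hqpos x).ne']
    ring
  -- key identity
  have keyx : ∀ x, P' x * Real.log (a x) + P' x - a x * Q' x
      = ∑ y, ((q t y * G y x) * (a y * Real.log (a x) - a y * Real.log (a y) - a x + a y)
          + (p t y * Real.log (a y)) * G y x) := by
    intro x
    have h1 : P' x * Real.log (a x) + P' x - a x * Q' x
        = ∑ y, ((p t y * G y x) * Real.log (a x) + p t y * G y x - a x * (q t y * G y x)) := by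
      simp only [hP'def, hQ'def]
      rw [Finset.sum_sub_distrib, Finset.sum_add_distrib, ← Finset.sum_mul, ← Finset.mul_sum]
    rw [h1]
    refine Finset.sum_congr rfl fun y _ => ?_
    rw [hPa y]
    ring
  have hdouble : ∑ x, ∑ y, (p t y * Real.log (a y)) * G y x = 0 := by
    rw [Finset.sum_comm]
    apply Finset.sum_eq_zero
    intro y _
    rw [← Finset.mul_sum, hG.2 y, mul_zero]
  have hDsum : D = ∑ x, ∑ y,
      (q t y * G y x) * (a y * Real.log (a x) - a y * Real.log (a y) - a x + a y) := by
    rw [hDval, Finset.sum_congr rfl fun x _ => (hsimp x).trans (keyx x)]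
    rw [show (∑ x, ∑ y,
        ((q t y * G y x) * (a y * Real.log (a x) - a y * Real.log (a y) - a x + a y)
          + (p t y * Real.log (a y)) * G y x))
      = (∑ x, ∑ y,
          (q t y * G y x) * (a y * Real.log (a x) - a y * Real.log (a y) - a x + a y))
        + ∑ x, ∑ y, (p t y * Real.log (a y)) * G y x by
        rw [← Finset.sum_add_distrib]
        exact Finset.sum_congr rfl fun x _ => Finset.sum_add_distrib]
    rw [hdouble, add_zero]
  -- nonpositivity of each term
  have hE_le : ∀ x y,
      (q t y * G y x) * (a y * Real.log (a x) - a y * Real.log (a y) - a x + a y) ≤ 0 := by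
    intro x y
    rcases eq_or_ne x y with rfl | hxy
    · have h0 : a x * Real.log (a x) - a x * Real.log (a x) - a x + a x = 0 := by ring
      rw [h0, mul_zero]
    · have hcoef : 0 ≤ q t y * G y x := mul_nonneg (hqpos y).le (hG.1 y x (Ne.symm hxy))
      have hinner : a y * Real.log (a x) - a y * Real.log (a y) - a x + a y ≤ 0 := by
        have hu : 0 < a x / a y := div_pos (hapos x) (hapos y)
        have hlog := Real.log_le_sub_one_of_pos hu
        rw [Real.log_div (hapos x).ne' (hapos y).ne'] at hlog
        have h2 := mul_le_mul_of_nonneg_left hlog (hapos y).le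
        have h3 : a y * (a x / a y) = a x := by rw [mul_comm, div_mul_cancel₀ _ (hapos y).ne']
        have h4 : a y * (Real.log (a x) - Real.log (a y))
            = a y * Real.log (a x) - a y * Real.log (a y) := by ring
        have h5 : a y * (a x / a y - 1) = a x - a y := by rw [mul_sub, h3, mul_one]
        rw [h4, h5] at h2
        linarith
      exact mul_nonpos_iff.mpr (Or.inl ⟨hcoef, hinner⟩)
  constructor
  · -- D = 0 → p t = q t
    intro hDz
    have hflat : ∑ z ∈ Finset.univ ×ˢ Finset.univ,
        (q t z.2 * G z.2 z.1) * (a z.2 * Real.log (a z.1) - a z.2 * Real.log (a z.2)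
          - a z.1 + a z.2) = 0 := by
      rw [Finset.sum_product]
      rw [hDz] at hDsum
      exact hDsum.symm
    have hzero : ∀ x y,
        (q t y * G y x) * (a y * Real.log (a x) - a y * Real.log (a y) - a x + a y) = 0 := by
      intro x y
      have := (Finset.sum_eq_zero_iff_of_nonpos
        (fun z _ => hE_le z.1 z.2)).mp hflat (x, y) (Finset.mem_product.mpr
          ⟨Finset.mem_univ _, Finset.mem_univ _⟩)
      exact this
    have edge : ∀ y x : Fin d, y ≠ x → 0 < G y x → a x = a y := by
      intro y x hyx hGyx
      have h0 := hzero x y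
      have hcoef : 0 < q t y * G y x := mul_pos (hqpos y) hGyx
      have hinner0 : a y * Real.log (a x) - a y * Real.log (a y) - a x + a y = 0 := by
        rcases mul_eq_zero.mp h0 with h | h
        · exact absurd h hcoef.ne'
        · exact h
      by_contra hne
      have hu : 0 < a x / a y := div_pos (hapos x) (hapos y)
      have hune : a x / a y ≠ 1 := fun h1 => hne ((div_eq_one_iff_eq (hapos y).ne').mp h1)
      have hlog := Real.log_lt_sub_one_of_pos hu hune
      rw [Real.log_div (hapos x).ne' (hapos y).ne'] at hlog
      have h2 := mul_lt_mul_of_pos_left hlog (hapos y)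
      have h3 : a y * (a x / a y) = a x := by rw [mul_comm, div_mul_cancel₀ _ (hapos y).ne']
      have h4 : a y * (Real.log (a x) - Real.log (a y))
          = a y * Real.log (a x) - a y * Real.log (a y) := by ring
      have h5 : a y * (a x / a y - 1) = a x - a y := by rw [mul_sub, h3, mul_one]
      rw [h4, h5] at h2
      linarith
    have hx0 : (0 : ℕ) < d := by omega
    set x0 : Fin d := ⟨0, hx0⟩ with hx0def
    have haux : ∀ z, Relation.TransGen (fun a b => a ≠ b ∧ 0 < G a b) x0 z → a z = a x0 := by
      intro z hz
      induction hz with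
      | single h => exact edge _ _ h.1 h.2
      | tail hb e ih => exact (edge _ _ e.1 e.2).trans ih
    have hconst : ∀ z, a z = a x0 := by
      intro z
      rcases eq_or_ne z x0 with rfl | hz
      · rfl
      · exact haux z (hGirr x0 z (Ne.symm hz))
    have hsum1 : ∑ x, p t x = 1 := (hp.1 t ht.le).2
    have hsum2 : ∑ x, q t x = 1 := (hq.1 t ht.le).2
    have hsc : ∑ x, q t x * a x0 = 1 := by
      rw [← hsum1]
      exact (Finset.sum_congr rfl fun x _ => by rw [hPa x, hconst x]).symm
    have ha1 : a x0 = 1 := by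
      rw [← Finset.sum_mul, hsum2, one_mul] at hsc
      exact hsc
    funext x
    rw [hPa x, hconst x, ha1, mul_one]
  · -- p t = q t → D = 0
    intro hpq
    rw [hDval]
    apply Finset.sum_eq_zero
    intro x _
    simp only [hP'def, hQ'def, hpq]
    ring
end

section
/- Let K : 𝒳 × ℝ^d → ℝ be such that K(x,·) is twice continuously differentiable for each x ∈ 𝒳. Then there exists a constant C < ∞ such that for every N ∈ ℕ and all x, y ∈ 𝒳^N that differ in exactly one coordinate l ∈ {1,…,N}, | U_N(y) − U_N(x) − Ψ(x_l, y_l, r^N(x)) | ≤ C/N, where Ψ(x,y,p) = H^y(p) − H^x(p). -/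
open scoped BigOperators

/-- Empirical measure of a configuration `x ∈ 𝒳^N`, as a vector in `ℝ^d`:
`r^N_y(x) = (1/N) ∑_i 1_{x_i = y}`. -/
noncomputable def empMeasure {d N : ℕ} (x : Fin N → Fin d) : Fin d → ℝ :=
  fun y => (1 / (N : ℝ)) * ∑ i, if x i = y then 1 else 0

/-- The `N`-particle energy `U_N(x) = ∑_i K(x_i, r^N(x))`. -/
noncomputable def energyU {d N : ℕ} (K : Fin d → (Fin d → ℝ) → ℝ)
    (x : Fin N → Fin d) : ℝ :=
  ∑ i, K (x i) (empMeasure x)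

/-- `H^x(p) = K^x(p) + ∑_z (∂K^z/∂p_x)(p) · p_z`. -/
noncomputable def gibbsH {d : ℕ} (K : Fin d → (Fin d → ℝ) → ℝ)
    (x : Fin d) (p : Fin d → ℝ) : ℝ :=
  K x p + ∑ z, (fderiv ℝ (K z) p (Pi.single x 1)) * p z

/-- `Ψ(x,y,p) = H^y(p) - H^x(p)`. -/
noncomputable def gibbsPsi {d : ℕ} (K : Fin d → (Fin d → ℝ) → ℝ)
    (x y : Fin d) (p : Fin d → ℝ) : ℝ :=
  gibbsH K y p - gibbsH K x p

open Metric Set Finset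

/-- Lipschitz and Taylor bounds for a C² function on the closed unit ball. -/
lemma exists_bounds {E : Type*} [NormedAddCommGroup E] [NormedSpace ℝ E] [FiniteDimensional ℝ E]
    (f : E → ℝ) (hf : ContDiff ℝ 2 f) :
    ∃ L M : ℝ, 0 ≤ L ∧ 0 ≤ M ∧
      (∀ p ∈ closedBall (0:E) 1, ∀ q ∈ closedBall (0:E) 1,
        |f q - f p| ≤ L * ‖q - p‖) ∧
      (∀ p ∈ closedBall (0:E) 1, ∀ q ∈ closedBall (0:E) 1,
        |f q - f p - fderiv ℝ f p (q - p)| ≤ M * ‖q - p‖ ^ 2) := by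
  have hf1 : ContDiff ℝ 1 f := hf.of_le one_le_two
  have hdf : Differentiable ℝ f := hf1.differentiable one_ne_zero
  set φ : E → (E →L[ℝ] ℝ) := fderiv ℝ f with hφ
  have hφ1 : ContDiff ℝ 1 φ := hf.fderiv_right (le_refl 2)
  have hφd : Differentiable ℝ φ := hφ1.differentiable one_ne_zero
  -- bound on ‖φ‖ on the ball
  obtain ⟨L, hL⟩ := (isCompact_closedBall (0:E) 1).exists_bound_of_continuousOn
    (hφ1.continuous.continuousOn)
  -- bound on ‖fderiv φ‖ on the ball
  obtain ⟨M, hM⟩ := (isCompact_closedBall (0:E) 1).exists_bound_of_continuousOn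
    ((hφ1.fderiv_right (m := 0) (by norm_num)).continuous.continuousOn)
  have hL0 : 0 ≤ L := le_trans (norm_nonneg _) (hL 0 (mem_closedBall_self zero_le_one))
  have hM0 : 0 ≤ M := le_trans (norm_nonneg _) (hM 0 (mem_closedBall_self zero_le_one))
  refine ⟨L, M, hL0, hM0, ?_, ?_⟩
  · intro p hp q hq
    have := (convex_closedBall (0:E) 1).norm_image_sub_le_of_norm_fderiv_le
      (fun u _ => hdf u) hL hp hq
    simpa [Real.norm_eq_abs] using this
  · intro p hp q hq
    -- φ is M-lipschitz on ball
    have hφlip : ∀ u ∈ closedBall (0:E) 1, ‖φ u - φ p‖ ≤ M * ‖u - p‖ :=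
      fun u hu => (convex_closedBall (0:E) 1).norm_image_sub_le_of_norm_fderiv_le
        (fun w _ => hφd w) hM hp hu
    set g : E → ℝ := fun u => f u - φ p u with hg
    have hgd : ∀ u, DifferentiableAt ℝ g u := fun u =>
      (hdf u).sub ((φ p).differentiable.differentiableAt)
    have hgderiv : ∀ u, fderiv ℝ g u = φ u - φ p := by
      intro u
      rw [hg]
      rw [fderiv_fun_sub (hdf u) ((φ p).differentiable.differentiableAt)]
      simp [ContinuousLinearMap.fderiv]
      rfl
    have hseg : segment ℝ p q ⊆ closedBall (0:E) 1 :=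
      (convex_closedBall _ _).segment_subset hp hq
    have hbound : ∀ u ∈ segment ℝ p q, ‖fderiv ℝ g u‖ ≤ M * ‖q - p‖ := by
      intro u hu
      rw [hgderiv]
      obtain ⟨a, b, ha, hb, hab, rfl⟩ := hu
      have h1 : (a • p + b • q) - p = b • (q - p) := by
        have : a = 1 - b := by linarith
        rw [this]; module
      calc ‖φ (a • p + b • q) - φ p‖ ≤ M * ‖(a • p + b • q) - p‖ :=
            hφlip _ (hseg ⟨a, b, ha, hb, hab, rfl⟩)
        _ ≤ M * ‖q - p‖ := by
            rw [h1, norm_smul]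
            have : ‖b‖ * ‖q - p‖ ≤ 1 * ‖q - p‖ := by
              apply mul_le_mul_of_nonneg_right _ (norm_nonneg _)
              rw [Real.norm_eq_abs, abs_of_nonneg hb]; linarith
            nlinarith [norm_nonneg (q - p)]
    have := (convex_segment p q).norm_image_sub_le_of_norm_fderiv_le
      (fun u _ => hgd u) hbound (left_mem_segment ℝ p q) (right_mem_segment ℝ p q)
    have h2 : g q - g p = f q - f p - φ p (q - p) := by
      simp only [hg, map_sub]; ring
    rw [h2, Real.norm_eq_abs] at this
    calc |f q - f p - fderiv ℝ f p (q - p)| ≤ M * ‖q - p‖ * ‖q - p‖ := this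
      _ = M * ‖q - p‖ ^ 2 := by ring

/-- If `K(x,·)` is `C²` for each `x`, there is a constant `C < ∞` such that for
every `N` and all configurations `x, y ∈ 𝒳^N` differing in exactly one
coordinate `l`, `|U_N(y) - U_N(x) - Ψ(x_l, y_l, r^N(x))| ≤ C / N`. -/
theorem energy_difference_approximation
    (d : ℕ) (hd : 2 ≤ d) (K : Fin d → (Fin d → ℝ) → ℝ)
    (hK : ∀ x : Fin d, ContDiff ℝ 2 (K x)) :
    ∃ C : ℝ, ∀ N : ℕ, 0 < N → ∀ x y : Fin N → Fin d, ∀ l : Fin N,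
      x l ≠ y l → (∀ j : Fin N, j ≠ l → x j = y j) →
      |energyU K y - energyU K x - gibbsPsi K (x l) (y l) (empMeasure x)|
        ≤ C / (N : ℝ) := by
  choose L M hL0 hM0 hLip hTay using fun z => exists_bounds (K z) (hK z)
  refine ⟨4 * ∑ z, L z + 4 * ∑ z, M z, ?_⟩
  intro N hN x y l hxl hagree
  have hNpos : (0:ℝ) < N := Nat.cast_pos.mpr hN
  have hNne : (N:ℝ) ≠ 0 := ne_of_gt hNpos
  set p := empMeasure x with hp
  set q := empMeasure y with hq
  -- empirical measures are in the unit ball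
  have hmem : ∀ w : Fin N → Fin d, empMeasure w ∈ closedBall (0:Fin d → ℝ) 1 := by
    intro w
    rw [mem_closedBall, dist_zero_right]
    rw [pi_norm_le_iff_of_nonneg zero_le_one]
    intro z
    have h1 : (0:ℝ) ≤ ∑ i, if w i = z then (1:ℝ) else 0 :=
      Finset.sum_nonneg (fun i _ => by positivity)
    have h2 : (∑ i, if w i = z then (1:ℝ) else 0) ≤ N := by
      calc (∑ i, if w i = z then (1:ℝ) else 0) ≤ ∑ _i : Fin N, (1:ℝ) :=
            Finset.sum_le_sum (fun i _ => by split <;> norm_num)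
        _ = N := by simp
    rw [Real.norm_eq_abs, empMeasure, abs_of_nonneg (by positivity)]
    rw [div_mul_eq_mul_div, one_mul, div_le_one hNpos]
    exact h2
  have hpmem := hmem x
  have hqmem := hmem y
  -- coordinate formula for q - p
  have hqp : ∀ z, q z - p z =
      (1/(N:ℝ)) * ((if y l = z then (1:ℝ) else 0) - (if x l = z then 1 else 0)) := by
    intro z
    rw [hp, hq, empMeasure, empMeasure, ← mul_sub, ← Finset.sum_sub_distrib]
    congr 1
    rw [Finset.sum_eq_single l]
    · intro j _ hj
      rw [hagree j hj, sub_self]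
    · intro h; exact absurd (Finset.mem_univ l) h
  -- norm bound on v := q - p
  have hvnorm : ‖q - p‖ ≤ 2 / N := by
    rw [pi_norm_le_iff_of_nonneg (by positivity)]
    intro z
    rw [Real.norm_eq_abs, Pi.sub_apply, hqp z, abs_mul]
    have h2 : |(if y l = z then (1:ℝ) else 0) - (if x l = z then 1 else 0)| ≤ 2 := by
      split_ifs <;> norm_num
    calc |1/(N:ℝ)| * |(if y l = z then (1:ℝ) else 0) - (if x l = z then 1 else 0)|
        ≤ (1/N) * 2 := by
          apply mul_le_mul _ h2 (abs_nonneg _) (by positivity)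
          rw [abs_of_nonneg (by positivity)]
      _ = 2 / N := by ring
  -- single difference as N • (q - p)
  have hsingle : (Pi.single (y l) 1 - Pi.single (x l) 1 : Fin d → ℝ) = (N:ℝ) • (q - p) := by
    funext z
    simp only [Pi.sub_apply, Pi.smul_apply, smul_eq_mul, Pi.single_apply]
    rw [hqp z]
    field_simp
    simp [eq_comm]
  -- the sum-swap identity
  have hswap : ∑ z, (fderiv ℝ (K z) p (Pi.single (y l) 1) -
        fderiv ℝ (K z) p (Pi.single (x l) 1)) * p z
      = ∑ i, fderiv ℝ (K (x i)) p (q - p) := by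
    have h1 : ∀ z : Fin d,
        (fderiv ℝ (K z) p (Pi.single (y l) 1) - fderiv ℝ (K z) p (Pi.single (x l) 1))
          = (N:ℝ) * fderiv ℝ (K z) p (q - p) := by
      intro z
      rw [← map_sub, hsingle, map_smul, smul_eq_mul]
    calc ∑ z, (fderiv ℝ (K z) p (Pi.single (y l) 1) -
          fderiv ℝ (K z) p (Pi.single (x l) 1)) * p z
        = ∑ z, fderiv ℝ (K z) p (q - p) * ((N:ℝ) * p z) := by
          refine Finset.sum_congr rfl (fun z _ => ?_)
          rw [h1 z]; ring
      _ = ∑ z, fderiv ℝ (K z) p (q - p) * (∑ i, if x i = z then (1:ℝ) else 0) := by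
          refine Finset.sum_congr rfl (fun z _ => ?_)
          congr 1
          rw [hp, empMeasure]
          field_simp
      _ = ∑ z, ∑ i, fderiv ℝ (K z) p (q - p) * (if x i = z then (1:ℝ) else 0) := by
          refine Finset.sum_congr rfl (fun z _ => ?_)
          rw [Finset.mul_sum]
      _ = ∑ i, ∑ z, fderiv ℝ (K z) p (q - p) * (if x i = z then (1:ℝ) else 0) :=
          Finset.sum_comm
      _ = ∑ i, fderiv ℝ (K (x i)) p (q - p) := by
          refine Finset.sum_congr rfl (fun i _ => ?_)
          rw [Finset.sum_eq_single (x i)]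
          · simp
          · intro z _ hz
            rw [if_neg (fun h => hz h.symm), mul_zero]
          · intro h; exact absurd (Finset.mem_univ (x i)) h
  -- main algebraic identity
  have hid : energyU K y - energyU K x - gibbsPsi K (x l) (y l) p =
      (∑ i, (K (x i) q - K (x i) p - fderiv ℝ (K (x i)) p (q - p)))
        + ((K (y l) q - K (y l) p) - (K (x l) q - K (x l) p)) := by
    have hU : energyU K y - energyU K x =
        (∑ i, (K (x i) q - K (x i) p)) + (K (y l) q - K (x l) q) := by
      have h3 : ∑ i, K (y i) q - ∑ i, K (x i) q = K (y l) q - K (x l) q := by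
        rw [← Finset.sum_sub_distrib, Finset.sum_eq_single l]
        · intro j _ hj
          rw [hagree j hj, sub_self]
        · intro h; exact absurd (Finset.mem_univ l) h
      have : energyU K y - energyU K x
          = (∑ i, K (y i) q - ∑ i, K (x i) q) + (∑ i, K (x i) q - ∑ i, K (x i) p) := by
        rw [energyU, energyU, ← hq, ← hp]; ring
      rw [this, h3, Finset.sum_sub_distrib]
      ring
    have hPsi : gibbsPsi K (x l) (y l) p =
        (K (y l) p - K (x l) p) + ∑ i, fderiv ℝ (K (x i)) p (q - p) := by
      have hsub : ∑ z, (fderiv ℝ (K z) p (Pi.single (y l) 1)) * p z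
          - ∑ z, (fderiv ℝ (K z) p (Pi.single (x l) 1)) * p z
          = ∑ i, fderiv ℝ (K (x i)) p (q - p) := by
        rw [← Finset.sum_sub_distrib, ← hswap]
        exact Finset.sum_congr rfl (fun z _ => by ring)
      rw [gibbsPsi, gibbsH, gibbsH]
      linarith [hsub]
    rw [hU, hPsi]
    simp only [Finset.sum_sub_distrib]
    ring
  rw [hid]
  -- now the bound
  have hvnn : (0:ℝ) ≤ ‖q - p‖ := norm_nonneg _
  have hsumL : ∀ z : Fin d, L z ≤ ∑ w, L w :=
    fun z => Finset.single_le_sum (fun w _ => hL0 w) (Finset.mem_univ z)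
  have hsumM : ∀ z : Fin d, M z ≤ ∑ w, M w :=
    fun z => Finset.single_le_sum (fun w _ => hM0 w) (Finset.mem_univ z)
  have hsumL0 : (0:ℝ) ≤ ∑ w, L w := Finset.sum_nonneg (fun w _ => hL0 w)
  have hsumM0 : (0:ℝ) ≤ ∑ w, M w := Finset.sum_nonneg (fun w _ => hM0 w)
  have hTsum : |∑ i, (K (x i) q - K (x i) p - fderiv ℝ (K (x i)) p (q - p))|
      ≤ (N:ℝ) * (∑ w, M w) * ‖q - p‖ ^ 2 := by
    calc |∑ i, (K (x i) q - K (x i) p - fderiv ℝ (K (x i)) p (q - p))|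
        ≤ ∑ i, |K (x i) q - K (x i) p - fderiv ℝ (K (x i)) p (q - p)| :=
          Finset.abs_sum_le_sum_abs _ _
      _ ≤ ∑ _i : Fin N, (∑ w, M w) * ‖q - p‖ ^ 2 := by
          refine Finset.sum_le_sum (fun i _ => ?_)
          calc |K (x i) q - K (x i) p - fderiv ℝ (K (x i)) p (q - p)|
              ≤ M (x i) * ‖q - p‖ ^ 2 := hTay (x i) p hpmem q hqmem
            _ ≤ (∑ w, M w) * ‖q - p‖ ^ 2 := by
                apply mul_le_mul_of_nonneg_right (hsumM (x i)) (by positivity)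
      _ = (N:ℝ) * (∑ w, M w) * ‖q - p‖ ^ 2 := by
          rw [Finset.sum_const]; simp; ring
  have hLy : |K (y l) q - K (y l) p| ≤ (∑ w, L w) * ‖q - p‖ :=
    le_trans (hLip (y l) p hpmem q hqmem)
      (mul_le_mul_of_nonneg_right (hsumL (y l)) hvnn)
  have hLx : |K (x l) q - K (x l) p| ≤ (∑ w, L w) * ‖q - p‖ :=
    le_trans (hLip (x l) p hpmem q hqmem)
      (mul_le_mul_of_nonneg_right (hsumL (x l)) hvnn)
  calc |(∑ i, (K (x i) q - K (x i) p - fderiv ℝ (K (x i)) p (q - p)))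
        + ((K (y l) q - K (y l) p) - (K (x l) q - K (x l) p))|
      ≤ |∑ i, (K (x i) q - K (x i) p - fderiv ℝ (K (x i)) p (q - p))|
        + |K (y l) q - K (y l) p| + |K (x l) q - K (x l) p| := by
        have := abs_add_le (∑ i, (K (x i) q - K (x i) p - fderiv ℝ (K (x i)) p (q - p)))
          ((K (y l) q - K (y l) p) - (K (x l) q - K (x l) p))
        have h2 := abs_sub (K (y l) q - K (y l) p) (K (x l) q - K (x l) p)
        linarith
    _ ≤ (N:ℝ) * (∑ w, M w) * ‖q - p‖ ^ 2 + 2 * (∑ w, L w) * ‖q - p‖ := by linarith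
    _ ≤ (4 * ∑ z, L z + 4 * ∑ z, M z) / N := by
        have h4 : ‖q - p‖ ^ 2 ≤ (2/N) ^ 2 := by
          apply sq_le_sq' _ hvnorm
          linarith
        have h5 : (N:ℝ) * (∑ w, M w) * ‖q - p‖ ^ 2 ≤ (N:ℝ) * (∑ w, M w) * (2/N)^2 := by
          apply mul_le_mul_of_nonneg_left h4 (by positivity)
        have h6 : 2 * (∑ w, L w) * ‖q - p‖ ≤ 2 * (∑ w, L w) * (2/N) := by
          apply mul_le_mul_of_nonneg_left hvnorm (by positivity)
        have h7 : (N:ℝ) * (∑ w, M w) * (2/N)^2 = 4 * (∑ w, M w) / N := by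
          field_simp; ring
        have h8 : 2 * (∑ w, L w) * (2/N) = 4 * (∑ w, L w) / N := by
          field_simp; ring
        rw [h7] at h5; rw [h8] at h6
        rw [add_div]
        linarith
end

section
/- Let K : 𝒳 × ℝ^d → ℝ with K(x,·) continuous for each x ∈ 𝒳, and let Z_N = Σ_{x∈𝒳^N} exp(−Σ_{i=1}^N K(x_i, r^N(x))). Then lim_{N→∞} (1/N) log Z_N = − inf_{q ∈ 𝒫(𝒳)} { Σ_{x∈𝒳} q_x log q_x + Σ_{x∈𝒳} K(x,q) q_x }, where the infimum is finite. Equivalently, with ν the uniform measure on 𝒳 and Φ(q) = Σ_x K(x,q) q_x, the limit equals −inf_{q∈𝒫(𝒳)} {R(q‖ν) + Φ(q)} + log|𝒳|. -/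
open scoped BigOperators
open Filter

/-- The partition function `Z_N = ∑_{x ∈ 𝒳^N} exp(−U_N(x))`. -/
noncomputable def partitionZ (d : ℕ) (K : Fin d → (Fin d → ℝ) → ℝ) (N : ℕ) : ℝ :=
  ∑ x : Fin N → Fin d, Real.exp (-(energyU K x))

namespace SanovAux

variable {d : ℕ}

/-- count of symbol y in configuration x -/
def cnt {N : ℕ} (x : Fin N → Fin d) (y : Fin d) : ℕ :=
  (Finset.univ.filter fun i => x i = y).card

lemma cnt_le {N : ℕ} (x : Fin N → Fin d) (y : Fin d) : cnt x y ≤ N := by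
  simpa [cnt] using (Finset.card_filter_le Finset.univ fun i => x i = y)

lemma sum_cnt {N : ℕ} (x : Fin N → Fin d) : ∑ y, cnt x y = N := by
  classical
  have h := Finset.card_eq_sum_card_fiberwise
    (f := x) (s := Finset.univ) (t := Finset.univ) (fun i _ => Finset.mem_univ (x i))
  simp only [Finset.card_univ, Fintype.card_fin] at h
  exact ((by rfl : ∑ y, cnt x y = _).trans h.symm)

lemma empMeasure_eq {N : ℕ} (x : Fin N → Fin d) (y : Fin d) :
    empMeasure x y = (cnt x y : ℝ) / N := by
  simp [empMeasure, cnt, Finset.sum_boole, div_eq_inv_mul]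

lemma cnt_cast {N : ℕ} (hN : 0 < N) (x : Fin N → Fin d) (y : Fin d) :
    (cnt x y : ℝ) = N * empMeasure x y := by
  rw [empMeasure_eq]
  field_simp

lemma sum_comp_eq {N : ℕ} (x : Fin N → Fin d) (f : Fin d → ℝ) :
    ∑ i, f (x i) = ∑ y, (cnt x y : ℝ) * f y := by
  classical
  rw [← Finset.sum_fiberwise Finset.univ x (fun i => f (x i))]
  refine Finset.sum_congr rfl fun y _ => ?_
  have h : ∀ i ∈ Finset.univ.filter fun i => x i = y, f (x i) = f y := by
    intro i hi
    simp only [Finset.mem_filter] at hi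
    rw [hi.2]
  rw [Finset.sum_congr rfl h, Finset.sum_const, cnt, nsmul_eq_mul]

lemma prod_comp_eq {N : ℕ} (x : Fin N → Fin d) (f : Fin d → ℝ) :
    ∏ i, f (x i) = ∏ y, f y ^ cnt x y := by
  classical
  rw [← Finset.prod_fiberwise Finset.univ x (fun i => f (x i))]
  refine Finset.prod_congr rfl fun y _ => ?_
  have h : ∀ i ∈ Finset.univ.filter fun i => x i = y, f (x i) = f y := by
    intro i hi
    simp only [Finset.mem_filter] at hi
    rw [hi.2]
  rw [Finset.prod_congr rfl h, Finset.prod_const, cnt]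

lemma sum_prod_one {N : ℕ} {q : Fin d → ℝ} (hq : ∑ y, q y = 1) :
    ∑ x : Fin N → Fin d, ∏ i, q (x i) = 1 := by
  classical
  have := Finset.prod_univ_sum (fun _ : Fin N => (Finset.univ : Finset (Fin d)))
    (fun _ y => q y)
  rw [Fintype.piFinset_univ] at this
  rw [← this]
  simp [hq]

noncomputable def phi (K : Fin d → (Fin d → ℝ) → ℝ) (q : Fin d → ℝ) : ℝ := ∑ x, K x q * q x
noncomputable def ent (q : Fin d → ℝ) : ℝ := ∑ x, q x * Real.log (q x)
noncomputable def lin (q p : Fin d → ℝ) : ℝ := ∑ y, p y * Real.log (q y)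

lemma continuous_phi (K : Fin d → (Fin d → ℝ) → ℝ) (hK : ∀ x, Continuous (K x)) :
    Continuous (phi K) := by
  refine continuous_finset_sum _ fun x _ => ((hK x).mul (continuous_apply x))

lemma continuous_ent : Continuous (ent (d := d)) := by
  refine continuous_finset_sum _ fun x _ => ?_
  exact Real.continuous_mul_log.comp (continuous_apply x)

lemma continuous_lin (q : Fin d → ℝ) : Continuous (lin q) := by
  refine continuous_finset_sum _ fun y _ => (continuous_apply y).mul continuous_const

lemma empMeasure_nonneg {N : ℕ} (x : Fin N → Fin d) (y : Fin d) :
    0 ≤ empMeasure x y := by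
  rw [empMeasure_eq]
  positivity

lemma empMeasure_mem {N : ℕ} (hN : 0 < N) (x : Fin N → Fin d) :
    empMeasure x ∈ stdSimplex ℝ (Fin d) := by
  constructor
  · exact fun y => empMeasure_nonneg x y
  · have : ∑ y, empMeasure x y = (∑ y, (cnt x y : ℝ)) / N := by
      rw [Finset.sum_div]
      exact Finset.sum_congr rfl fun y _ => empMeasure_eq x y
    rw [this]
    rw [← Nat.cast_sum, sum_cnt]
    field_simp

lemma energyU_eq {N : ℕ} (hN : 0 < N) (K : Fin d → (Fin d → ℝ) → ℝ) (x : Fin N → Fin d) :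
    energyU K x = N * phi K (empMeasure x) := by
  rw [energyU, sum_comp_eq x (fun y => K y (empMeasure x)), phi, Finset.mul_sum]
  refine Finset.sum_congr rfl fun y _ => ?_
  rw [cnt_cast hN]
  ring

/-- `∏ y, g y ^ t y = exp (∑ y, t y * log (g y))` when `g ≥ 0` and `g y = 0 → t y = 0`. -/
lemma prod_pow_eq_exp (g : Fin d → ℝ) (t : Fin d → ℕ) (hg : ∀ y, 0 ≤ g y)
    (h : ∀ y, 0 < g y ∨ t y = 0) :
    ∏ y, g y ^ t y = Real.exp (∑ y, (t y : ℝ) * Real.log (g y)) := by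
  rw [Real.exp_sum]
  refine Finset.prod_congr rfl fun y _ => ?_
  rcases h y with hy | hy
  · rw [← Real.log_pow, Real.exp_log (by positivity)]
  · simp [hy]

/-- Product of a positive probability vector along a configuration. -/
lemma prod_comp_q_eq {N : ℕ} (hN : 0 < N) (x : Fin N → Fin d) {q : Fin d → ℝ}
    (hq : ∀ y, 0 < q y) :
    ∏ i, q (x i) = Real.exp (N * lin q (empMeasure x)) := by
  rw [prod_comp_eq, prod_pow_eq_exp q (cnt x) (fun y => (hq y).le) (fun y => Or.inl (hq y))]
  congr 1
  rw [lin, Finset.mul_sum]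
  refine Finset.sum_congr rfl fun y _ => ?_
  rw [cnt_cast hN]
  ring

lemma cnt_pos_of {N : ℕ} (x : Fin N → Fin d) (y : Fin d) (h : cnt x y ≠ 0) :
    0 < empMeasure x y := by
  rw [empMeasure_eq]
  have h1 : 0 < cnt x y := Nat.pos_of_ne_zero h
  have hN : 0 < N := lt_of_lt_of_le h1 (cnt_le x y)
  apply div_pos
  · exact_mod_cast h1
  · exact_mod_cast hN

/-- Product of the own empirical measure along the configuration equals `exp (N * ent r)`. -/
lemma prod_comp_emp_eq {N : ℕ} (hN : 0 < N) (x : Fin N → Fin d) :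
    ∏ i, empMeasure x (x i) = Real.exp (N * ent (empMeasure x)) := by
  rw [prod_comp_eq]
  rw [prod_pow_eq_exp _ (cnt x) (fun y => empMeasure_nonneg x y) (fun y => ?_)]
  · congr 1
    rw [ent, Finset.mul_sum]
    refine Finset.sum_congr rfl fun y _ => ?_
    rcases Nat.eq_zero_or_pos (cnt x y) with h0 | h0
    · rw [empMeasure_eq, h0]
      simp
    · rw [cnt_cast hN]
      ring
  · rcases Nat.eq_zero_or_pos (cnt x y) with h0 | h0
    · exact Or.inr h0
    · exact Or.inl (cnt_pos_of x y h0.ne')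

/-- Strict Gibbs inequality: `p ≠ q` probability vectors with `q > 0`, then
`∑ p log q < ∑ p log p`. -/
lemma gibbs_strict {p q : Fin d → ℝ} (hp : p ∈ stdSimplex ℝ (Fin d))
    (hq : q ∈ stdSimplex ℝ (Fin d)) (hqpos : ∀ y, 0 < q y) (hne : p ≠ q) :
    ∑ y, p y * Real.log (q y) < ∑ y, p y * Real.log (p y) := by
  -- find y₀ with p y₀ < q y₀
  have hsum : ∑ y, p y = ∑ y, q y := by rw [hp.2, hq.2]
  have hex : ∃ y, p y < q y := by
    by_contra hcon
    push_neg at hcon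
    apply hne
    funext y
    have h0 : ∑ y, (p y - q y) = 0 := by
      rw [Finset.sum_sub_distrib, hsum, sub_self]
    have := (Finset.sum_eq_zero_iff_of_nonneg
      (fun y _ => sub_nonneg.mpr (hcon y))).mp h0 y (Finset.mem_univ y)
    linarith
  obtain ⟨y₀, hy₀⟩ := hex
  have key : ∑ y, (p y * Real.log (q y) - p y * Real.log (p y)) < ∑ y, (q y - p y) := by
    refine Finset.sum_lt_sum (fun y _ => ?_) ⟨y₀, Finset.mem_univ y₀, ?_⟩
    · rcases eq_or_lt_of_le (hp.1 y) with h0 | h0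
      · rw [← h0]
        simp [(hq.1 y)]
      · rw [← mul_sub, ← Real.log_div (hqpos y).ne' h0.ne']
        have := Real.log_le_sub_one_of_pos (div_pos (hqpos y) h0)
        calc p y * Real.log (q y / p y) ≤ p y * (q y / p y - 1) :=
              mul_le_mul_of_nonneg_left this h0.le
          _ = q y - p y := by field_simp
    · rcases eq_or_lt_of_le (hp.1 y₀) with h0 | h0
      · rw [← h0]
        simpa using hqpos y₀
      · rw [← mul_sub, ← Real.log_div (hqpos y₀).ne' h0.ne']
        have hne1 : q y₀ / p y₀ ≠ 1 := by
          intro h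
          rw [div_eq_one_iff_eq h0.ne'] at h
          exact absurd h (ne_of_gt hy₀)
        have := Real.log_lt_sub_one_of_pos (div_pos (hqpos y₀) h0) hne1
        calc p y₀ * Real.log (q y₀ / p y₀) < p y₀ * (q y₀ / p y₀ - 1) :=
              (mul_lt_mul_iff_right₀ h0).mpr this
          _ = q y₀ - p y₀ := by field_simp
  have : ∑ y, (q y - p y) = 0 := by rw [Finset.sum_sub_distrib, hsum, sub_self]
  rw [this] at key
  rw [Finset.sum_sub_distrib] at key
  linarith


lemma key_sum_le {N : ℕ} (hN : 0 < N) (w : (Fin N → Fin d) → ℝ)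
    (hw0 : ∀ x, 0 ≤ w x) (hw1 : ∀ x, w x ≤ 1) :
    ∑ x : Fin N → Fin d, (∏ i, empMeasure x (x i)) * w x ≤ ((N : ℝ) + 1) ^ d := by
  classical
  have hprod : ∀ x : Fin N → Fin d, 0 ≤ ∏ i, empMeasure x (x i) := fun x =>
    Finset.prod_nonneg fun i _ => empMeasure_nonneg x (x i)
  have step1 : ∑ x : Fin N → Fin d, (∏ i, empMeasure x (x i)) * w x ≤
      ∑ x : Fin N → Fin d, ∏ i, empMeasure x (x i) := by
    refine Finset.sum_le_sum fun x _ => ?_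
    calc (∏ i, empMeasure x (x i)) * w x ≤ (∏ i, empMeasure x (x i)) * 1 :=
          mul_le_mul_of_nonneg_left (hw1 x) (hprod x)
      _ = _ := mul_one _
  refine step1.trans ?_
  set c : (Fin N → Fin d) → (Fin d → Fin (N + 1)) :=
    fun x y => ⟨cnt x y, Nat.lt_succ_of_le (cnt_le x y)⟩ with hc
  have step2 : ∑ x : Fin N → Fin d, ∏ i, empMeasure x (x i) =
      ∑ t : Fin d → Fin (N + 1), ∑ x ∈ Finset.univ.filter (fun x => c x = t),
        ∏ i, empMeasure x (x i) := by
    exact (Finset.sum_fiberwise Finset.univ c (fun x => ∏ i, empMeasure x (x i))).symm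
  rw [step2]
  have step3 : ∀ t : Fin d → Fin (N + 1),
      ∑ x ∈ Finset.univ.filter (fun x => c x = t), ∏ i, empMeasure x (x i) ≤ 1 := by
    intro t
    rcases (Finset.univ.filter (fun x => c x = t)).eq_empty_or_nonempty with he | ⟨x0, hx0⟩
    · rw [he, Finset.sum_empty]; norm_num
    · have hx0' : c x0 = t := (Finset.mem_filter.mp hx0).2
      set p := empMeasure x0 with hp
      have hmem := empMeasure_mem hN x0
      have hsame : ∀ x ∈ Finset.univ.filter (fun x => c x = t),
          (∏ i, empMeasure x (x i)) = ∏ i, p (x i) := by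
        intro x hx
        have hcx : c x = c x0 := (Finset.mem_filter.mp hx).2.trans hx0'.symm
        have hemp : empMeasure x = p := by
          funext y
          show empMeasure x y = empMeasure x0 y
          rw [empMeasure_eq, empMeasure_eq]
          have : cnt x y = cnt x0 y := congrArg Fin.val (congrFun hcx y)
          rw [this]
        rw [hemp]
      rw [Finset.sum_congr rfl hsame]
      calc ∑ x ∈ Finset.univ.filter (fun x => c x = t), ∏ i, p (x i)
          ≤ ∑ x : Fin N → Fin d, ∏ i, p (x i) :=
            Finset.sum_le_sum_of_subset_of_nonneg (Finset.filter_subset _ _)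
              (fun x _ _ => Finset.prod_nonneg fun i _ => hmem.1 (x i))
        _ = 1 := sum_prod_one hmem.2
  calc ∑ t : Fin d → Fin (N + 1), ∑ x ∈ Finset.univ.filter (fun x => c x = t),
        ∏ i, empMeasure x (x i) ≤ ∑ _t : Fin d → Fin (N + 1), (1 : ℝ) :=
        Finset.sum_le_sum fun t _ => step3 t
    _ = ((N : ℝ) + 1) ^ d := by
        rw [Finset.sum_const, Finset.card_univ, Fintype.card_fun]
        push_cast
        simp [nsmul_eq_mul]


lemma partitionZ_pos (hd : 0 < d) (K : Fin d → (Fin d → ℝ) → ℝ) (N : ℕ) :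
    0 < partitionZ d K N := by
  have : Nonempty (Fin d) := ⟨⟨0, hd⟩⟩
  exact Finset.sum_pos (fun x _ => Real.exp_pos _) ⟨fun _ => Classical.arbitrary _,
    Finset.mem_univ _⟩

lemma partitionZ_le {N : ℕ} (hN : 0 < N) (K : Fin d → (Fin d → ℝ) → ℝ) {m : ℝ}
    (hm : ∀ q ∈ stdSimplex ℝ (Fin d), m ≤ ent q + phi K q) :
    partitionZ d K N ≤ ((N : ℝ) + 1) ^ d * Real.exp (-(N * m)) := by
  set w : (Fin N → Fin d) → ℝ :=
    fun x => Real.exp (N * m - N * (ent (empMeasure x) + phi K (empMeasure x))) with hw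
  have hkey : ∀ x : Fin N → Fin d,
      Real.exp (-(energyU K x)) = (∏ i, empMeasure x (x i)) * w x * Real.exp (-(N * m)) := by
    intro x
    rw [energyU_eq hN, prod_comp_emp_eq hN, hw, ← Real.exp_add, ← Real.exp_add]
    ring_nf
  have hsum : partitionZ d K N =
      (∑ x : Fin N → Fin d, (∏ i, empMeasure x (x i)) * w x) * Real.exp (-(N * m)) := by
    rw [partitionZ, Finset.sum_mul]
    exact Finset.sum_congr rfl fun x _ => hkey x
  rw [hsum]
  refine mul_le_mul_of_nonneg_right ?_ (Real.exp_pos _).le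
  refine key_sum_le hN w (fun x => (Real.exp_pos _).le) fun x => ?_
  rw [hw]
  refine Real.exp_le_one_iff.mpr ?_
  have := hm _ (empMeasure_mem hN x)
  have hN' : (0:ℝ) ≤ N := Nat.cast_nonneg N
  nlinarith

lemma partitionZ_ge {N : ℕ} (hN : 0 < N) (K : Fin d → (Fin d → ℝ) → ℝ)
    {q : Fin d → ℝ} (hqS : q ∈ stdSimplex ℝ (Fin d)) (hqpos : ∀ y, 0 < q y)
    {δ c A : ℝ} (hc : 0 < c)
    (hfar : ∀ p ∈ stdSimplex ℝ (Fin d), δ ≤ dist p q → c ≤ ent p - lin q p)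
    (hnear : ∀ p ∈ stdSimplex ℝ (Fin d), dist p q < δ → phi K p + lin q p ≤ A) :
    (1 - ((N : ℝ) + 1) ^ d * Real.exp (-(N * c))) * Real.exp (-(N * A)) ≤
      partitionZ d K N := by
  classical
  set P : (Fin N → Fin d) → ℝ := fun x => ∏ i, q (x i) with hP
  have hP0 : ∀ x, 0 ≤ P x := fun x => Finset.prod_nonneg fun i _ => (hqpos (x i)).le
  set nearS : Finset (Fin N → Fin d) :=
    Finset.univ.filter (fun x => dist (empMeasure x) q < δ) with hnearS
  have htot : ∑ x ∈ nearS, P x + ∑ x ∈ nearSᶜ, P x = 1 := by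
    rw [Finset.sum_add_sum_compl]
    exact sum_prod_one hqS.2
  set B : ℝ := ((N : ℝ) + 1) ^ d * Real.exp (-(N * c)) with hB
  have hfarsum : ∑ x ∈ nearSᶜ, P x ≤ B := by
    have step1 : ∀ x ∈ nearSᶜ, P x ≤ (∏ i, empMeasure x (x i)) * Real.exp (-(N * c)) := by
      intro x hx
      have hδ : δ ≤ dist (empMeasure x) q := by
        rw [Finset.mem_compl, hnearS, Finset.mem_filter] at hx
        push_neg at hx
        exact hx (Finset.mem_univ x)
      have hcle := hfar _ (empMeasure_mem hN x) hδ
      show ∏ i, q (x i) ≤ (∏ i, empMeasure x (x i)) * Real.exp (-(N * c))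
      rw [prod_comp_q_eq hN x hqpos, prod_comp_emp_eq hN, ← Real.exp_add]
      refine Real.exp_le_exp.mpr ?_
      have hN' : (0:ℝ) ≤ N := Nat.cast_nonneg N
      nlinarith
    calc ∑ x ∈ nearSᶜ, P x
        ≤ ∑ x ∈ nearSᶜ, (∏ i, empMeasure x (x i)) * Real.exp (-(N * c)) :=
          Finset.sum_le_sum step1
      _ ≤ ∑ x : Fin N → Fin d, (∏ i, empMeasure x (x i)) * Real.exp (-(N * c)) :=
          Finset.sum_le_sum_of_subset_of_nonneg (Finset.subset_univ _)
            (fun x _ _ => mul_nonneg (Finset.prod_nonneg fun i _ =>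
              empMeasure_nonneg x (x i)) (Real.exp_pos _).le)
      _ = (∑ x : Fin N → Fin d, (∏ i, empMeasure x (x i)) * 1) * Real.exp (-(N * c)) := by
          rw [Finset.sum_mul]
          exact Finset.sum_congr rfl fun x _ => by ring
      _ ≤ ((N : ℝ) + 1) ^ d * Real.exp (-(N * c)) :=
          mul_le_mul_of_nonneg_right
            (key_sum_le hN (fun _ => 1) (fun _ => zero_le_one) (fun _ => le_refl 1))
            (Real.exp_pos _).le
  have hZ : (∑ x ∈ nearS, P x) * Real.exp (-(N * A)) ≤ partitionZ d K N := by
    rw [Finset.sum_mul]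
    calc ∑ x ∈ nearS, P x * Real.exp (-(N * A))
        ≤ ∑ x ∈ nearS, Real.exp (-(energyU K x)) := by
          refine Finset.sum_le_sum fun x hx => ?_
          have hδ : dist (empMeasure x) q < δ := by
            rw [hnearS, Finset.mem_filter] at hx
            exact hx.2
          have hAle := hnear _ (empMeasure_mem hN x) hδ
          show P x * Real.exp (-(N * A)) ≤ Real.exp (-(energyU K x))
          have hPx : P x = ∏ i, q (x i) := rfl
          rw [energyU_eq hN, hPx, prod_comp_q_eq hN x hqpos, ← Real.exp_add]
          refine Real.exp_le_exp.mpr ?_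
          have hN' : (0:ℝ) ≤ N := Nat.cast_nonneg N
          nlinarith
      _ ≤ partitionZ d K N :=
          Finset.sum_le_sum_of_subset_of_nonneg (Finset.subset_univ _)
            (fun x _ _ => (Real.exp_pos _).le)
  have h1B : 1 - B ≤ ∑ x ∈ nearS, P x := by
    have : 0 ≤ ∑ x ∈ nearSᶜ, P x := Finset.sum_nonneg fun x _ => hP0 x
    linarith
  calc (1 - B) * Real.exp (-(N * A)) ≤ (∑ x ∈ nearS, P x) * Real.exp (-(N * A)) :=
        mul_le_mul_of_nonneg_right h1B (Real.exp_pos _).le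
    _ ≤ partitionZ d K N := hZ




lemma tendsto_log_div (d : ℕ) :
    Tendsto (fun n : ℕ => (d : ℝ) * Real.log ((n : ℝ) + 1) / n) atTop (nhds 0) := by
  have A : Tendsto (fun x : ℝ => Real.log x / x) atTop (nhds 0) := by
    simpa using Real.tendsto_pow_log_div_mul_add_atTop 1 0 1 one_ne_zero
  have B : Tendsto (fun n : ℕ => ((n : ℝ) + 1)) atTop atTop :=
    tendsto_atTop_add_const_right _ _ tendsto_natCast_atTop_atTop
  have AB : Tendsto (fun n : ℕ => Real.log ((n : ℝ) + 1) / ((n : ℝ) + 1)) atTop (nhds 0) :=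
    A.comp B
  have C : Tendsto (fun n : ℕ => ((n : ℝ) + 1) / n) atTop (nhds 1) := by
    have h0 : Tendsto (fun n : ℕ => 1 + 1 / (n : ℝ)) atTop (nhds (1 + 0)) :=
      tendsto_const_nhds.add tendsto_one_div_atTop_nhds_zero_nat
    rw [add_zero] at h0
    refine h0.congr' ?_
    filter_upwards [eventually_ge_atTop 1] with n hn
    have : (n : ℝ) ≠ 0 := Nat.cast_ne_zero.mpr (by omega)
    field_simp
  have := (AB.mul C).const_mul (d : ℝ)
  rw [zero_mul, mul_zero] at this
  refine this.congr' ?_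
  filter_upwards [eventually_ge_atTop 1] with n hn
  have h1 : (n : ℝ) ≠ 0 := Nat.cast_ne_zero.mpr (by omega)
  have h2 : (n : ℝ) + 1 ≠ 0 := by positivity
  field_simp

set_option maxHeartbeats 1000000 in
lemma tendsto_poly_exp (d : ℕ) {c : ℝ} (hc : 0 < c) :
    Tendsto (fun n : ℕ => ((n : ℝ) + 1) ^ d * Real.exp (-((n : ℝ) * c))) atTop (nhds 0) := by
  have hg := Real.tendsto_pow_mul_exp_neg_atTop_nhds_zero d
  have hcomp : Tendsto (fun n : ℕ => ((n : ℝ) + 1) * c) atTop atTop :=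
    (tendsto_atTop_add_const_right _ _ tendsto_natCast_atTop_atTop).atTop_mul_const hc
  have h := (hg.comp hcomp).const_mul ((c⁻¹) ^ d * Real.exp c)
  rw [mul_zero] at h
  refine h.congr fun n => ?_
  show (c⁻¹) ^ d * Real.exp c * ((((n : ℝ) + 1) * c) ^ d * Real.exp (-(((n : ℝ) + 1) * c)))
      = ((n : ℝ) + 1) ^ d * Real.exp (-((n : ℝ) * c))
  rw [mul_pow]
  have h1 : Real.exp c * Real.exp (-(((n : ℝ) + 1) * c)) = Real.exp (-((n : ℝ) * c)) := by
    rw [← Real.exp_add]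
    congr 1
    ring
  have h2 : (c⁻¹) ^ d * c ^ d = 1 := by
    rw [← mul_pow, inv_mul_cancel₀ hc.ne', one_pow]
  calc (c⁻¹) ^ d * Real.exp c * ((((n : ℝ) + 1)) ^ d * c ^ d * Real.exp (-(((n : ℝ) + 1) * c)))
      = ((c⁻¹) ^ d * c ^ d) * (((n : ℝ) + 1)) ^ d *
        (Real.exp c * Real.exp (-(((n : ℝ) + 1) * c))) := by ring
    _ = ((n : ℝ) + 1) ^ d * Real.exp (-((n : ℝ) * c)) := by rw [h1, h2, one_mul]



lemma exists_q_pos (hd0 : 0 < d) (K : Fin d → (Fin d → ℝ) → ℝ)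
    (hK : ∀ x, Continuous (K x)) {q0 : Fin d → ℝ} (hq0S : q0 ∈ stdSimplex ℝ (Fin d))
    {ε : ℝ} (hε : 0 < ε) :
    ∃ q ∈ stdSimplex ℝ (Fin d), (∀ y, 0 < q y) ∧
      ent q + phi K q < ent q0 + phi K q0 + ε := by
  classical
  set F : (Fin d → ℝ) → ℝ := fun p => ent p + phi K p with hF
  have hFc : Continuous F := continuous_ent.add (continuous_phi K hK)
  set path : ℝ → (Fin d → ℝ) := fun θ y => (1 - θ) * q0 y + θ * (1 / d) with hpath
  have hpathc : Continuous path := by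
    refine continuous_pi fun y => ?_
    fun_prop
  have hpath0 : path 0 = q0 := funext fun y => by simp [hpath]
  have htd : Tendsto (fun θ => F (path θ)) (nhds 0) (nhds (F q0)) := by
    have := (hFc.comp hpathc).continuousAt (x := (0:ℝ))
    rwa [ContinuousAt, Function.comp, hpath0] at this
  have hev : ∀ᶠ θ in nhds (0:ℝ), F (path θ) < F q0 + ε :=
    htd.eventually_lt_const (by linarith)
  obtain ⟨r, hr0, hball⟩ := Metric.eventually_nhds_iff.mp hev
  set θ := min (r / 2) (1 / 2) with hθ
  have hθ0 : 0 < θ := lt_min (by linarith) (by norm_num)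
  have hθ1 : θ ≤ 1 / 2 := min_le_right _ _
  have hθr : dist θ (0:ℝ) < r := by
    rw [Real.dist_eq, sub_zero, abs_of_pos hθ0]
    calc θ ≤ r / 2 := min_le_left _ _
      _ < r := by linarith
  have hd' : (0:ℝ) < d := Nat.cast_pos.mpr hd0
  have hpos : ∀ y, 0 < path θ y := by
    intro y
    have h1 : 0 ≤ (1 - θ) * q0 y := mul_nonneg (by linarith) (hq0S.1 y)
    have h2 : 0 < θ * (1 / d) := mul_pos hθ0 (by positivity)
    show 0 < (1 - θ) * q0 y + θ * (1 / d)
    linarith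
  have hmem : path θ ∈ stdSimplex ℝ (Fin d) := by
    constructor
    · exact fun y => (hpos y).le
    · show ∑ y, ((1 - θ) * q0 y + θ * (1 / d)) = 1
      rw [Finset.sum_add_distrib, ← Finset.mul_sum, hq0S.2, Finset.sum_const,
        Finset.card_univ, Fintype.card_fin, nsmul_eq_mul]
      field_simp
      ring
  exact ⟨path θ, hmem, hpos, hball hθr⟩

lemma exists_far_const {q : Fin d → ℝ} (hqS : q ∈ stdSimplex ℝ (Fin d))
    (hqpos : ∀ y, 0 < q y) {δ : ℝ} (hδ0 : 0 < δ) :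
    ∃ c > 0, ∀ p ∈ stdSimplex ℝ (Fin d), δ ≤ dist p q → c ≤ ent p - lin q p := by
  classical
  set R : (Fin d → ℝ) → ℝ := fun p => ent p - lin q p with hR
  have hRc : Continuous R := continuous_ent.sub (continuous_lin q)
  set T : Set (Fin d → ℝ) := stdSimplex ℝ (Fin d) ∩ {p | δ ≤ dist p q} with hT
  rcases T.eq_empty_or_nonempty with hTe | hTne
  · refine ⟨1, one_pos, fun p hp hdist => ?_⟩
    exact absurd (show p ∈ T from ⟨hp, hdist⟩) (by rw [hTe]; exact Set.notMem_empty p)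
  · have hTc : IsCompact T := (isCompact_stdSimplex (𝕜 := ℝ) (ι := Fin d)).inter_right
      (isClosed_le continuous_const (continuous_id.dist continuous_const))
    obtain ⟨p1, hp1T, hp1min⟩ := hTc.exists_isMinOn hTne hRc.continuousOn
    have hp1ne : p1 ≠ q := by
      intro h
      have h2 : δ ≤ dist p1 q := hp1T.2
      rw [h, dist_self] at h2
      linarith
    have hc0 : 0 < R p1 :=
      sub_pos.mpr (gibbs_strict hp1T.1 hqS hqpos hp1ne)
    exact ⟨R p1, hc0, fun p hp hdist => hp1min (show p ∈ T from ⟨hp, hdist⟩)⟩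

end SanovAux

open SanovAux

/-- `lim_{N→∞} (1/N) log Z_N = − inf_{q ∈ 𝒫(𝒳)} {∑ q_x log q_x + ∑ K(x,q) q_x}`;
equivalently, with `ν` uniform on `𝒳` and `Φ(q) = ∑ K(x,q) q_x`, the limit is
`− inf_q {R(q‖ν) + Φ(q)} + log |𝒳|`. -/

theorem partition_function_limit
    (d : ℕ) (hd : 2 ≤ d)
    (K : Fin d → (Fin d → ℝ) → ℝ)
    (hK : ∀ x : Fin d, Continuous (K x)) :
    Tendsto (fun N : ℕ => (1 / (N : ℝ)) * Real.log (partitionZ d K N)) atTop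
      (nhds (-(sInf { v : ℝ | ∃ q ∈ stdSimplex ℝ (Fin d),
        v = ∑ x, q x * Real.log (q x) + ∑ x, K x q * q x }))) ∧
    (-(sInf { v : ℝ | ∃ q ∈ stdSimplex ℝ (Fin d),
        v = ∑ x, q x * Real.log (q x) + ∑ x, K x q * q x }))
      = -(sInf { v : ℝ | ∃ q ∈ stdSimplex ℝ (Fin d),
          v = (∑ x, q x * Real.log (q x / ((d : ℝ)⁻¹)))
            + ∑ x, K x q * q x }) + Real.log d := by
  classical
  have hd0 : 0 < d := by omega
  haveI : Nonempty (Fin d) := ⟨⟨0, hd0⟩⟩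
  have hFc : Continuous (fun p => ent p + phi K p) :=
    continuous_ent.add (continuous_phi K hK)
  have hSne : (stdSimplex ℝ (Fin d)).Nonempty :=
    ⟨_, ite_eq_mem_stdSimplex ℝ (Classical.arbitrary (Fin d))⟩
  obtain ⟨q0, hq0S, hq0min⟩ :=
    (isCompact_stdSimplex (𝕜 := ℝ) (ι := Fin d)).exists_isMinOn hSne hFc.continuousOn
  have hmin : ∀ p ∈ stdSimplex ℝ (Fin d), ent q0 + phi K q0 ≤ ent p + phi K p :=
    fun p hp => hq0min hp
  set m : ℝ := ent q0 + phi K q0 with hm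
  have hleast : IsLeast { v : ℝ | ∃ q ∈ stdSimplex ℝ (Fin d),
      v = ∑ x, q x * Real.log (q x) + ∑ x, K x q * q x } m := by
    constructor
    · exact ⟨q0, hq0S, rfl⟩
    · rintro v ⟨q, hqS, rfl⟩
      exact hmin q hqS
  have hsInf : sInf { v : ℝ | ∃ q ∈ stdSimplex ℝ (Fin d),
      v = ∑ x, q x * Real.log (q x) + ∑ x, K x q * q x } = m := hleast.csInf_eq
  constructor
  · -- the limit statement
    rw [hsInf, Metric.tendsto_atTop]
    intro ε hε
    set ε' : ℝ := ε / 8 with hε'def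
    have hε' : 0 < ε' := by positivity
    obtain ⟨q, hqS, hqpos, hqF⟩ := exists_q_pos hd0 K hK hq0S hε'
    -- continuity of G at q
    set G : (Fin d → ℝ) → ℝ := fun p => phi K p + lin q p with hG
    have hGc : Continuous G := (continuous_phi K hK).add (continuous_lin q)
    have hGq : G q = ent q + phi K q := by
      have : lin q q = ent q := rfl
      rw [hG]
      show phi K q + lin q q = ent q + phi K q
      rw [this]; ring
    obtain ⟨δ, hδ0, hδ⟩ : ∃ δ > 0, ∀ p, dist p q < δ → G p < G q + ε' := by
      have hca : ContinuousAt G q := hGc.continuousAt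
      obtain ⟨δ, hδ0, h⟩ := Metric.eventually_nhds_iff.mp
        (hca.eventually_lt_const (show G q < G q + ε' by linarith))
      exact ⟨δ, hδ0, fun p hp => h hp⟩
    set A : ℝ := m + 2 * ε' with hA
    have hnear : ∀ p ∈ stdSimplex ℝ (Fin d), dist p q < δ → phi K p + lin q p ≤ A := by
      intro p _ hdist
      have h1 : G p < G q + ε' := hδ p hdist
      rw [hGq] at h1
      show phi K p + lin q p ≤ A
      have : G p = phi K p + lin q p := rfl
      rw [← this]
      linarith
    obtain ⟨c, hc0, hcfar⟩ := exists_far_const hqS hqpos hδ0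
    -- eventual bounds
    have h1 : ∀ᶠ n : ℕ in atTop, ‖(d : ℝ) * Real.log ((n : ℝ) + 1) / n‖ < ε' :=
      (NormedAddCommGroup.tendsto_nhds_zero.mp (tendsto_log_div d)) ε' hε'
    have h2 : ∀ᶠ n : ℕ in atTop,
        ((n : ℝ) + 1) ^ d * Real.exp (-((n : ℝ) * c)) ≤ 1 / 2 := by
      filter_upwards [(NormedAddCommGroup.tendsto_nhds_zero.mp
        (tendsto_poly_exp d hc0)) (1/2) (by norm_num)] with n hn
      exact (le_abs_self _).trans hn.le
    have h3 : ∀ᶠ n : ℕ in atTop, Real.log 2 / n ≤ ε' := by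
      have hlim : Tendsto (fun n : ℕ => Real.log 2 * (1 / n)) atTop (nhds 0) := by
        simpa using tendsto_one_div_atTop_nhds_zero_nat.const_mul (Real.log 2)
      filter_upwards [(NormedAddCommGroup.tendsto_nhds_zero.mp hlim) ε' hε'] with n hn
      calc Real.log 2 / n = Real.log 2 * (1 / n) := by ring
        _ ≤ ‖Real.log 2 * (1 / n)‖ := le_abs_self _
        _ ≤ ε' := hn.le
    have h4 : ∀ᶠ n : ℕ in atTop, 1 ≤ n := eventually_ge_atTop 1
    obtain ⟨N0, hN0⟩ := eventually_atTop.mp (((h1.and h2).and (h3.and h4)))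
    refine ⟨N0, fun n hn => ?_⟩
    obtain ⟨⟨e1, e2⟩, e3, e4⟩ := hN0 n hn
    have hn0 : 0 < n := e4
    have hnR : (0 : ℝ) < n := Nat.cast_pos.mpr hn0
    have hZpos := partitionZ_pos hd0 K n
    -- upper bound
    have hup : (1 / (n : ℝ)) * Real.log (partitionZ d K n) ≤
        -m + (d : ℝ) * Real.log ((n : ℝ) + 1) / n := by
      have hZle := partitionZ_le hn0 K hmin
      have hRpos : (0 : ℝ) < ((n : ℝ) + 1) ^ d * Real.exp (-((n : ℝ) * m)) := by
        positivity
      have hlog : Real.log (partitionZ d K n) ≤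
          (d : ℝ) * Real.log ((n : ℝ) + 1) + -((n : ℝ) * m) := by
        have := (Real.log_le_log_iff hZpos hRpos).mpr hZle
        rwa [Real.log_mul (by positivity) (Real.exp_ne_zero _), Real.log_pow,
          Real.log_exp] at this
      calc (1 / (n : ℝ)) * Real.log (partitionZ d K n)
          ≤ (1 / (n : ℝ)) * ((d : ℝ) * Real.log ((n : ℝ) + 1) + -((n : ℝ) * m)) :=
            mul_le_mul_of_nonneg_left hlog (by positivity)
        _ = -m + (d : ℝ) * Real.log ((n : ℝ) + 1) / n := by
            field_simp
            ring
    -- lower bound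
    have hlow : -m - 3 * ε' ≤ (1 / (n : ℝ)) * Real.log (partitionZ d K n) := by
      have hZge := partitionZ_ge hn0 K hqS hqpos hc0 hcfar hnear
      have hhalf : (1 / 2 : ℝ) * Real.exp (-((n : ℝ) * A)) ≤ partitionZ d K n := by
        refine le_trans ?_ hZge
        have : (1 / 2 : ℝ) ≤ 1 - ((n : ℝ) + 1) ^ d * Real.exp (-((n : ℝ) * c)) := by
          linarith
        exact mul_le_mul_of_nonneg_right this (Real.exp_pos _).le
      have hlog : Real.log (1 / 2) + -((n : ℝ) * A) ≤ Real.log (partitionZ d K n) := by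
        have h5 := (Real.log_le_log_iff (by positivity) hZpos).mpr hhalf
        rwa [Real.log_mul (by norm_num) (Real.exp_ne_zero _), Real.log_exp] at h5
      have hlog2 : Real.log (1 / 2) = -Real.log 2 := by
        rw [one_div, Real.log_inv]
      calc -m - 3 * ε' = -(Real.log 2 / n) - A + (Real.log 2 / n - ε') := by
            rw [hA]; ring
        _ ≤ -(Real.log 2 / n) - A + 0 := by linarith
        _ = (1 / (n : ℝ)) * (Real.log (1 / 2) + -((n : ℝ) * A)) := by
            rw [hlog2]
            field_simp
            ring
        _ ≤ (1 / (n : ℝ)) * Real.log (partitionZ d K n) :=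
            mul_le_mul_of_nonneg_left hlog (by positivity)
    -- combine
    rw [Real.dist_eq, sub_neg_eq_add]
    have habs : |(d : ℝ) * Real.log ((n : ℝ) + 1) / n| < ε' := e1
    have hub2 : (1 / (n : ℝ)) * Real.log (partitionZ d K n) + m < ε' := by
      have := le_abs_self ((d : ℝ) * Real.log ((n : ℝ) + 1) / n)
      linarith
    have hlb2 : -(4 * ε') < (1 / (n : ℝ)) * Real.log (partitionZ d K n) + m := by
      linarith
    rw [abs_lt]
    constructor
    · have : 4 * ε' < ε := by rw [hε'def]; linarith
      linarith
    · have : ε' < ε := by rw [hε'def]; linarith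
      linarith
  · -- the equality of the two variational formulas
    have hd' : (0 : ℝ) < d := Nat.cast_pos.mpr hd0
    have hpt : ∀ q ∈ stdSimplex ℝ (Fin d),
        (∑ x, q x * Real.log (q x / ((d : ℝ)⁻¹))) =
          (∑ x, q x * Real.log (q x)) + Real.log d := by
      intro q hq
      have hterm : ∀ x, q x * Real.log (q x / ((d : ℝ)⁻¹)) =
          q x * Real.log (q x) + q x * Real.log d := by
        intro x
        rcases eq_or_lt_of_le (hq.1 x) with h0 | h0
        · rw [← h0]; simp
        · rw [div_eq_mul_inv, inv_inv, Real.log_mul h0.ne' hd'.ne']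
          ring
      rw [Finset.sum_congr rfl fun x _ => hterm x, Finset.sum_add_distrib,
        ← Finset.sum_mul, hq.2, one_mul]
    have hleast2 : IsLeast { v : ℝ | ∃ q ∈ stdSimplex ℝ (Fin d),
        v = (∑ x, q x * Real.log (q x / ((d : ℝ)⁻¹))) + ∑ x, K x q * q x }
        (m + Real.log d) := by
      constructor
      · refine ⟨q0, hq0S, ?_⟩
        rw [hpt q0 hq0S]
        show m + Real.log d = (ent q0 + Real.log d) + phi K q0
        rw [hm]; ring
      · rintro v ⟨q, hqS, rfl⟩
        rw [hpt q hqS]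
        have h6 := hmin q hqS
        show m + Real.log d ≤ (ent q + Real.log d) + phi K q
        have h7 : ent q + phi K q = (∑ x, q x * Real.log (q x)) + ∑ x, K x q * q x := rfl
        linarith
    rw [hsInf, hleast2.csInf_eq]
    ring
end

section
/- Let K : 𝒳 × ℝ^d → ℝ with K(x,·) twice continuously differentiable for each x ∈ 𝒳, let U_N(x) = Σ_{i=1}^N K(x_i, r^N(x)), and let π_N be the Gibbs measure on 𝒳^N given by π_N(x) = Z_N^{-1} exp(−U_N(x)), Z_N = Σ_{x∈𝒳^N} exp(−U_N(x)). For N ∈ ℕ define F̃_N : 𝒫(𝒳) → [0,∞] by F̃_N(p) = (1/N) R(⊗^N p ‖ π_N). Then for every p ∈ 𝒫(𝒳), lim_{N→∞} F̃_N(p) = Σ_{x∈𝒳} (K(x,p) + log p_x) p_x − C, where C = inf_{q∈𝒫(𝒳)} { Σ_{x∈𝒳} q_x log q_x + Σ_{x∈𝒳} K(x,q) q_x } is a finite constant independent of p. -/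
open scoped BigOperators
open Filter

/-- The Gibbs measure `π_N(x) = Z_N⁻¹ exp(−U_N(x))` on `𝒳^N`. -/
noncomputable def gibbsMeasure {d N : ℕ} (K : Fin d → (Fin d → ℝ) → ℝ)
    (x : Fin N → Fin d) : ℝ :=
  Real.exp (-(energyU K x)) / ∑ z : Fin N → Fin d, Real.exp (-(energyU K z))

/-- The product measure `⊗^N p` on `𝒳^N`. -/
noncomputable def productMeasure {d N : ℕ} (p : Fin d → ℝ)
    (x : Fin N → Fin d) : ℝ :=
  ∏ i, p (x i)

/-- Relative entropy of two probability vectors on `𝒳^N`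
(convention `0 log 0 = 0`). -/
noncomputable def relEntN {d N : ℕ} (P Q : (Fin N → Fin d) → ℝ) : ℝ :=
  ∑ x : Fin N → Fin d, P x * Real.log (P x / Q x)

/-- Scaled relative entropy `F̃_N(p) = (1/N) R(⊗^N p ‖ π_N)`. -/
noncomputable def tildeF {d : ℕ} (K : Fin d → (Fin d → ℝ) → ℝ) (N : ℕ)
    (p : Fin d → ℝ) : ℝ :=
  (1 / (N : ℝ)) * relEntN (productMeasure p) (gibbsMeasure (N := N) K)

namespace GibbsAux

variable {d N : ℕ}


lemma sum_prod_eq (f : Fin N → Fin d → ℝ) :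
    ∑ x : Fin N → Fin d, ∏ i, f i (x i) = ∏ i, ∑ y, f i y :=
  (Fintype.prod_sum f).symm

lemma expect_prod {q : Fin d → ℝ} (hq : ∑ y, q y = 1) (s : Finset (Fin N))
    (g : Fin N → Fin d → ℝ) :
    ∑ x : Fin N → Fin d, (∏ k, q (x k)) * ∏ k ∈ s, g k (x k)
      = ∏ k ∈ s, ∑ y, q y * g k y := by
  have h1 : ∀ x : Fin N → Fin d, (∏ k, q (x k)) * ∏ k ∈ s, g k (x k)
      = ∏ k, (q (x k) * (if k ∈ s then g k (x k) else 1)) := by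
    intro x
    rw [Finset.prod_mul_distrib]
    congr 1
    rw [Finset.prod_ite_mem, Finset.univ_inter]
  simp_rw [h1]
  rw [sum_prod_eq (fun k v => q v * if k ∈ s then g k v else 1)]
  have h2 : ∀ k, (∑ y, q y * (if k ∈ s then g k y else 1))
      = if k ∈ s then (∑ y, q y * g k y) else 1 := by
    intro k
    by_cases hk : k ∈ s <;> simp [hk, hq]
  simp_rw [h2]
  rw [Finset.prod_ite_mem, Finset.univ_inter]

lemma sum_productMeasure {q : Fin d → ℝ} (hq : ∑ y, q y = 1) :
    ∑ x : Fin N → Fin d, productMeasure q x = 1 := by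
  have h := expect_prod (N := N) hq ∅ (fun _ _ => 1)
  simpa [productMeasure] using h

lemma entropy_product {q : Fin d → ℝ} (hq : ∑ y, q y = 1) :
    ∑ x : Fin N → Fin d, productMeasure q x * Real.log (productMeasure q x)
      = N * ∑ y, q y * Real.log (q y) := by
  have key : ∀ x : Fin N → Fin d, productMeasure q x * Real.log (productMeasure q x)
      = ∑ i, (∏ k, q (x k)) * Real.log (q (x i)) := by
    intro x
    rw [← Finset.mul_sum]
    rcases eq_or_ne (productMeasure q x) 0 with h | h
    · have h' : (∏ k, q (x k)) = 0 := h
      rw [h, h', zero_mul, zero_mul]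
    · have hne : ∀ i ∈ Finset.univ, q (x i) ≠ 0 := by
        intro i _
        exact fun h0 => h (Finset.prod_eq_zero (Finset.mem_univ i) h0)
      unfold productMeasure
      rw [Real.log_prod hne]
  simp_rw [key]
  rw [Finset.sum_comm]
  have h2 : ∀ i : Fin N, ∑ x : Fin N → Fin d, (∏ k, q (x k)) * Real.log (q (x i))
      = ∑ y, q y * Real.log (q y) := by
    intro i
    have h := expect_prod (N := N) hq {i} (fun _ y => Real.log (q y))
    simpa using h
  simp_rw [h2]
  simp [Finset.sum_const, mul_comm]

lemma count_eq (x : Fin N → Fin d) (y : Fin d) (hN : N ≠ 0) :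
    (N : ℝ) * empMeasure x y = ∑ i, if x i = y then (1:ℝ) else 0 := by
  unfold empMeasure
  have : (N : ℝ) ≠ 0 := Nat.cast_ne_zero.mpr hN
  field_simp

lemma empMeasure_nonneg (x : Fin N → Fin d) (y : Fin d) : 0 ≤ empMeasure x y := by
  unfold empMeasure
  have : (0:ℝ) ≤ ∑ i, if x i = y then (1:ℝ) else 0 :=
    Finset.sum_nonneg fun i _ => by positivity
  positivity

lemma empMeasure_sum (x : Fin N → Fin d) (hN : N ≠ 0) :
    ∑ y, empMeasure x y = 1 := by
  unfold empMeasure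
  rw [← Finset.mul_sum, Finset.sum_comm]
  have h : ∀ i : Fin N, ∑ y, (if x i = y then (1:ℝ) else 0) = 1 := by
    intro i; simp
  simp_rw [h]
  have : (N : ℝ) ≠ 0 := Nat.cast_ne_zero.mpr hN
  simp [this]

lemma empMeasure_mem (x : Fin N → Fin d) (hN : N ≠ 0) :
    empMeasure x ∈ stdSimplex ℝ (Fin d) :=
  ⟨fun y => empMeasure_nonneg x y, empMeasure_sum x hN⟩

lemma energy_eq (K : Fin d → (Fin d → ℝ) → ℝ) (x : Fin N → Fin d) (hN : N ≠ 0) :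
    energyU K x = N * ∑ y, empMeasure x y * K y (empMeasure x) := by
  unfold energyU
  have h1 : ∀ i : Fin N, K (x i) (empMeasure x)
      = ∑ y, if x i = y then K y (empMeasure x) else 0 := by
    intro i; rw [Finset.sum_ite_eq]; simp
  simp_rw [h1]
  rw [Finset.sum_comm, Finset.mul_sum]
  apply Finset.sum_congr rfl
  intro y _
  have h2 : ∀ i : Fin N, (if x i = y then K y (empMeasure x) else 0)
      = (if x i = y then (1:ℝ) else 0) * K y (empMeasure x) := by
    intro i; split <;> simp
  simp_rw [h2]
  rw [← Finset.sum_mul, ← count_eq x y hN]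
  ring



lemma variance_le {q : Fin d → ℝ} (hq0 : ∀ y, 0 ≤ q y) (hq : ∑ y, q y = 1)
    (hN : N ≠ 0) (z : Fin d) :
    ∑ x : Fin N → Fin d, (∏ k, q (x k)) * (empMeasure x z - q z)^2 ≤ 1/N := by
  have expectp : ∀ (s : Finset (Fin N)) (g : Fin N → Fin d → ℝ),
      ∑ x : Fin N → Fin d, (∏ k, q (x k)) * ∏ k ∈ s, g k (x k)
        = ∏ k ∈ s, ∑ y, q y * g k y := fun s g => expect_prod hq s g
  set emp : (Fin N → Fin d) → Fin d → ℝ := empMeasure with hempdef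
  have hemp : ∀ (x : Fin N → Fin d) (y : Fin d),
      emp x y = (1 / (N:ℝ)) * ∑ i, if x i = y then 1 else 0 := fun x y => rfl
  have hNR : (N : ℝ) ≠ 0 := Nat.cast_ne_zero.mpr hN
  have hqz1 : q z ≤ 1 := by
    rw [← hq]
    exact Finset.single_le_sum (fun y _ => hq0 y) (Finset.mem_univ z)
  set a : Fin d → ℝ := fun w => (if w = z then (1:ℝ) else 0) - q z with ha
  set E : Fin N → Fin N → ℝ :=
    fun i j => ∑ x : Fin N → Fin d, (∏ k, q (x k)) * (a (x i) * a (x j)) with hE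
  have hqa : ∑ y, q y * a y = 0 := by
    rw [ha]
    simp only [mul_sub]
    rw [Finset.sum_sub_distrib]
    have h1 : ∑ y, q y * (if y = z then (1:ℝ) else 0) = q z := by
      have : ∀ y : Fin d, q y * (if y = z then (1:ℝ) else 0)
          = if y = z then q y else 0 := by intro y; split <;> simp
      simp_rw [this]
      rw [Finset.sum_ite_eq']
      simp
    rw [h1, ← Finset.sum_mul, hq, one_mul, sub_self]
  have hEoff : ∀ i j : Fin N, i ≠ j → E i j = 0 := by
    intro i j hij
    have h := expectp {i, j} (fun _ y => a y)
    rw [hE]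
    have hpair : ∀ x : Fin N → Fin d,
        ∏ k ∈ ({i, j} : Finset (Fin N)), a (x k) = a (x i) * a (x j) := by
      intro x
      rw [Finset.prod_pair hij]
    simp_rw [hpair] at h
    show ∑ x : Fin N → Fin d, (∏ k, q (x k)) * (a (x i) * a (x j)) = 0
    rw [h, Finset.prod_pair hij, hqa, zero_mul]
  have hEdiag : ∀ i : Fin N, E i i ≤ 1 := by
    intro i
    have h := expectp {i} (fun _ y => a y * a y)
    simp only [Finset.prod_singleton] at h
    have hEii : E i i = ∑ y, q y * (a y * a y) := h
    rw [hEii]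
    calc ∑ y, q y * (a y * a y) ≤ ∑ y, q y * 1 := by
          apply Finset.sum_le_sum
          intro y _
          apply mul_le_mul_of_nonneg_left _ (hq0 y)
          have haY : |a y| ≤ 1 := by
            rw [ha]
            simp only
            rw [abs_le]
            constructor <;> [skip; skip] <;> split <;> [skip;skip;skip;skip]
            all_goals nlinarith [hq0 z]
          nlinarith [haY, abs_nonneg (a y), sq_abs (a y), sq_nonneg (a y)]
      _ = 1 := by rw [← Finset.sum_mul, hq, one_mul]
  have hdiff : ∀ x : Fin N → Fin d, emp x z - q z = (1/(N:ℝ)) * ∑ i, a (x i) := by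
    intro x
    rw [hemp]
    have h2 : ∑ i : Fin N, a (x i) = (∑ i : Fin N, if x i = z then (1:ℝ) else 0) - N * q z := by
      rw [ha]
      simp only
      rw [Finset.sum_sub_distrib]
      simp [Finset.sum_const, Finset.card_univ]
    rw [h2]
    field_simp
    try ring
  have step1 : ∀ x : Fin N → Fin d, (∏ k, q (x k)) * (emp x z - q z)^2
      = (1/(N:ℝ)^2) * ∑ i, ∑ j, (∏ k, q (x k)) * (a (x i) * a (x j)) := by
    intro x
    have e1 : (emp x z - q z)^2 = (1/(N:ℝ))^2 * ∑ i, ∑ j, a (x i) * a (x j) := by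
      rw [hdiff, mul_pow]
      congr 1
      rw [sq, Finset.sum_mul_sum]
    rw [e1]
    simp_rw [Finset.mul_sum]
    apply Finset.sum_congr rfl
    intro i _
    apply Finset.sum_congr rfl
    intro j _
    ring
  calc ∑ x : Fin N → Fin d, (∏ k, q (x k)) * (emp x z - q z)^2
      = (1/(N:ℝ)^2) * ∑ x : Fin N → Fin d, ∑ i, ∑ j, (∏ k, q (x k)) * (a (x i) * a (x j)) := by
        simp_rw [step1]
        rw [← Finset.mul_sum]
    _ = (1/(N:ℝ)^2) * ∑ i, ∑ j, E i j := by
        congr 1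
        rw [Finset.sum_comm]
        apply Finset.sum_congr rfl
        intro i _
        rw [Finset.sum_comm]
    _ ≤ (1/(N:ℝ)^2) * N := by
        apply mul_le_mul_of_nonneg_left _ (by positivity)
        calc ∑ i, ∑ j, E i j = ∑ i : Fin N, E i i := by
              apply Finset.sum_congr rfl
              intro i _
              apply Finset.sum_eq_single i
              · intro j _ hji
                exact hEoff i j (Ne.symm hji)
              · intro h; exact absurd (Finset.mem_univ i) h
          _ ≤ ∑ i : Fin N, 1 := Finset.sum_le_sum fun i _ => hEdiag i
          _ = N := by simp
    _ = 1/N := by field_simp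



-- Cauchy-Schwarz step
lemma expect_abs_le {Ω : Type*} [Fintype Ω] (P : Ω → ℝ) (hP0 : ∀ x, 0 ≤ P x)
    (hP1 : ∑ x, P x = 1) (Δ : Ω → ℝ) (V : ℝ) (hV : 0 ≤ V)
    (hvar : ∑ x, P x * (Δ x)^2 ≤ V) :
    ∑ x, P x * |Δ x| ≤ Real.sqrt V := by
  have hcs := Finset.sum_mul_sq_le_sq_mul_sq Finset.univ
    (fun x => Real.sqrt (P x)) (fun x => Real.sqrt (P x) * |Δ x|)
  have h1 : ∀ x : Ω, Real.sqrt (P x) * (Real.sqrt (P x) * |Δ x|) = P x * |Δ x| := by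
    intro x
    rw [← mul_assoc, Real.mul_self_sqrt (hP0 x)]
  have h2 : ∀ x : Ω, Real.sqrt (P x) ^ 2 = P x := fun x => Real.sq_sqrt (hP0 x)
  have h3 : ∀ x : Ω, (Real.sqrt (P x) * |Δ x|) ^ 2 = P x * (Δ x)^2 := by
    intro x
    rw [mul_pow, Real.sq_sqrt (hP0 x), sq_abs]
  simp_rw [h1, h2, h3] at hcs
  rw [hP1, one_mul] at hcs
  have hnn : 0 ≤ ∑ x, P x * |Δ x| :=
    Finset.sum_nonneg fun x _ => mul_nonneg (hP0 x) (abs_nonneg _)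
  rw [Real.le_sqrt hnn hV]
  exact hcs.trans hvar

-- Gibbs variational inequality
lemma gibbs_ineq {Ω : Type*} [Fintype Ω] [Nonempty Ω] (P : Ω → ℝ)
    (hP0 : ∀ x, 0 ≤ P x) (hP1 : ∑ x, P x = 1) (a : Ω → ℝ) (ha : ∀ x, 0 < a x) :
    ∑ x, P x * Real.log (a x / P x) ≤ Real.log (∑ x, a x) := by
  set T := ∑ x, a x with hT
  have hTpos : 0 < T := Finset.sum_pos (fun x _ => ha x) Finset.univ_nonempty
  have key : ∀ x, P x * Real.log (a x / P x) ≤ a x / T - P x + P x * Real.log T := by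
    intro x
    rcases eq_or_lt_of_le (hP0 x) with h | h
    · rw [← h]
      simp only [zero_mul, mul_zero, sub_zero, add_zero, zero_add]
      have : 0 < a x / T := div_pos (ha x) hTpos
      linarith
    · have hax := ha x
      have h2 : Real.log (a x / (P x * T)) ≤ a x / (P x * T) - 1 :=
        Real.log_le_sub_one_of_pos (by positivity)
      have h1 : Real.log (a x / P x) = Real.log (a x / (P x * T)) + Real.log T := by
        rw [← Real.log_mul (by positivity) (ne_of_gt hTpos)]
        congr 1
        field_simp
      rw [h1, mul_add]
      have h3 : P x * Real.log (a x / (P x * T)) ≤ a x / T - P x := by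
        have := mul_le_mul_of_nonneg_left h2 (le_of_lt h)
        calc P x * Real.log (a x / (P x * T)) ≤ P x * (a x / (P x * T) - 1) := this
          _ = a x / T - P x := by field_simp
      linarith
  calc ∑ x, P x * Real.log (a x / P x)
      ≤ ∑ x, (a x / T - P x + P x * Real.log T) := Finset.sum_le_sum fun x _ => key x
    _ = Real.log T := by
        rw [Finset.sum_add_distrib, Finset.sum_sub_distrib, ← Finset.sum_div, ← hT,
          div_self (ne_of_gt hTpos), hP1, ← Finset.sum_mul, hP1, one_mul]
        ring



lemma count_eq' (x : Fin N → Fin d) (y : Fin d) (hN : N ≠ 0) :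
    (N : ℝ) * empMeasure x y
      = ((Finset.univ.filter (fun i => x i = y)).card : ℝ) := by
  unfold empMeasure
  have hcast : ∑ i : Fin N, (if x i = y then (1:ℝ) else 0)
      = ((Finset.univ.filter (fun i => x i = y)).card : ℝ) := by
    rw [Finset.sum_boole]
  rw [← hcast]
  have : (N : ℝ) ≠ 0 := Nat.cast_ne_zero.mpr hN
  field_simp

lemma prod_emp_eq_exp (x : Fin N → Fin d) (hN : N ≠ 0) :
    ∏ i, empMeasure x (x i)
      = Real.exp (∑ y, (N : ℝ) * (empMeasure x y * Real.log (empMeasure x y))) := by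
  set r := empMeasure x with hr
  set c : Fin d → ℕ := fun y => (Finset.univ.filter (fun i => x i = y)).card with hc
  have hcr : ∀ y, (N : ℝ) * r y = (c y : ℝ) := fun y => count_eq' x y hN
  have hrpos : ∀ y, 0 ≤ r y := by
    intro y
    rw [hr]
    unfold empMeasure
    have : (0:ℝ) ≤ ∑ i, if x i = y then (1:ℝ) else 0 :=
      Finset.sum_nonneg fun i _ => by positivity
    positivity
  have hzero : ∀ y, r y = 0 → c y = 0 := by
    intro y hy
    have := hcr y
    rw [hy, mul_zero] at this
    exact_mod_cast this.symm
  -- LHS = ∏_y r y ^ c y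
  have hL : ∏ i, r (x i) = ∏ y, r y ^ (c y) := by
    have h1 : ∀ i : Fin N, r (x i) = ∏ y, if x i = y then r y else 1 := by
      intro i
      rw [Finset.prod_ite_eq]
      simp
    simp_rw [h1]
    rw [Finset.prod_comm]
    apply Finset.prod_congr rfl
    intro y _
    rw [← Finset.prod_filter_mul_prod_filter_not Finset.univ (fun i => x i = y)]
    have e1 : ∏ i ∈ Finset.univ.filter (fun i => x i = y), (if x i = y then r y else 1)
        = r y ^ (c y) := by
      rw [Finset.prod_congr rfl (fun i hi => ?_), Finset.prod_const, hc]
      rw [Finset.mem_filter] at hi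
      simp [hi.2]
    have e2 : ∏ i ∈ Finset.univ.filter (fun i => ¬ x i = y), (if x i = y then r y else 1)
        = 1 := by
      apply Finset.prod_eq_one
      intro i hi
      rw [Finset.mem_filter] at hi
      simp [hi.2]
    rw [e1, e2, mul_one]
  -- RHS : exp of sum
  rw [Real.exp_sum]
  rw [hL]
  apply Finset.prod_congr rfl
  intro y _
  have : (N:ℝ) * (r y * Real.log (r y)) = (c y : ℝ) * Real.log (r y) := by
    rw [← mul_assoc, hcr y]
  rw [this]
  rcases eq_or_lt_of_le (hrpos y) with h0 | hpos
  · rw [← h0, hzero y h0.symm]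
    simp
  · rw [Real.exp_nat_mul, Real.exp_log hpos]

lemma sum_prod_emp_le (hN : N ≠ 0) :
    ∑ x : Fin N → Fin d, (∏ i, empMeasure x (x i)) ≤ ((N:ℝ)+1)^d := by
  classical
  have sumPM : ∀ q : Fin d → ℝ, (∑ y, q y = 1) →
      ∑ x : Fin N → Fin d, productMeasure q x = 1 := fun q hq => sum_productMeasure hq
  have hempmem : ∀ x : Fin N → Fin d, empMeasure x ∈ stdSimplex ℝ (Fin d) :=
    fun x => empMeasure_mem x hN
  set cnt : (Fin N → Fin d) → (Fin d → Fin (N+1)) :=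
    fun x y => ⟨(Finset.univ.filter (fun i => x i = y)).card, by
      have := Finset.card_filter_le Finset.univ (fun i => x i = y)
      simpa [Finset.card_univ] using Nat.lt_succ_of_le this⟩ with hcnt
  have hpart := Finset.sum_fiberwise Finset.univ cnt
    (fun x => ∏ i, empMeasure x (x i))
  rw [← hpart]
  have hfiber : ∀ b : Fin d → Fin (N+1),
      ∑ x ∈ Finset.univ.filter (fun x => cnt x = b), (∏ i, empMeasure x (x i)) ≤ 1 := by
    intro b
    rcases Finset.eq_empty_or_nonempty (Finset.univ.filter (fun x => cnt x = b)) with he | hne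
    · rw [he]
      simp
    · obtain ⟨x₀, hx₀⟩ := hne
      rw [Finset.mem_filter] at hx₀
      set q := empMeasure x₀ with hq
      have hqmem := hempmem x₀
      have hsame : ∀ x ∈ Finset.univ.filter (fun x => cnt x = b),
          (∏ i, empMeasure x (x i)) = productMeasure q x := by
        intro x hx
        rw [Finset.mem_filter] at hx
        have hemp_eq : empMeasure x = q := by
          funext y
          have h1 : (N:ℝ) * empMeasure x y = (N:ℝ) * empMeasure x₀ y := by
            rw [count_eq' x y hN, count_eq' x₀ y hN]
            have : cnt x y = cnt x₀ y := by rw [hx.2, hx₀.2]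
            have := congrArg (fun v : Fin (N+1) => (v : ℕ)) this
            simpa [hcnt] using this
          have hNR : (N:ℝ) ≠ 0 := Nat.cast_ne_zero.mpr hN
          exact mul_left_cancel₀ hNR h1
        rw [hemp_eq]
        rfl
      rw [Finset.sum_congr rfl hsame]
      have hsub : Finset.univ.filter (fun x => cnt x = b) ⊆ Finset.univ :=
        Finset.filter_subset _ _
      calc ∑ x ∈ Finset.univ.filter (fun x => cnt x = b), productMeasure q x
          ≤ ∑ x : Fin N → Fin d, productMeasure q x := by
            apply Finset.sum_le_sum_of_subset_of_nonneg hsub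
            intro x _ _
            exact Finset.prod_nonneg fun i _ => hqmem.1 (x i)
        _ = 1 := sumPM q hqmem.2
  calc ∑ b : Fin d → Fin (N+1), ∑ x ∈ Finset.univ.filter (fun x => cnt x = b),
        (∏ i, empMeasure x (x i))
      ≤ ∑ _b : Fin d → Fin (N+1), (1:ℝ) := Finset.sum_le_sum fun b _ => hfiber b
    _ = ((N:ℝ)+1)^d := by
        rw [Finset.sum_const, Finset.card_univ]
        simp [Fintype.card_fun]
        try push_cast
        try ring



lemma K_bounds (K : Fin d → (Fin d → ℝ) → ℝ) (hK : ∀ y, ContDiff ℝ 2 (K y)) :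
    ∃ L M : ℝ, 0 ≤ L ∧ 0 ≤ M ∧
      (∀ y : Fin d, ∀ a ∈ stdSimplex ℝ (Fin d), ∀ b ∈ stdSimplex ℝ (Fin d),
        |K y a - K y b| ≤ L * ∑ z, |a z - b z|) ∧
      (∀ y : Fin d, ∀ a ∈ stdSimplex ℝ (Fin d), |K y a| ≤ M) := by
  classical
  set B : Set (Fin d → ℝ) := Metric.closedBall 0 1 with hB
  have hBcompact : IsCompact B := isCompact_closedBall 0 1
  have hBconvex : Convex ℝ B := convex_closedBall 0 1
  have hsub : stdSimplex ℝ (Fin d) ⊆ B := stdSimplex_subset_closedBall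
  -- Lipschitz constants
  have hLy : ∀ y : Fin d, ∃ Ly : ℝ, 0 ≤ Ly ∧ ∀ a ∈ B, ∀ b ∈ B,
      |K y a - K y b| ≤ Ly * ‖a - b‖ := by
    intro y
    have hdiff : Differentiable ℝ (K y) := (hK y).differentiable (by norm_num)
    have hcont : Continuous (fderiv ℝ (K y)) := (hK y).continuous_fderiv (by norm_num)
    obtain ⟨Ly, hLy⟩ := hBcompact.exists_bound_of_continuousOn hcont.continuousOn
    refine ⟨max Ly 0, le_max_right _ _, ?_⟩
    intro a ha b hb
    have : ‖K y a - K y b‖ ≤ max Ly 0 * ‖a - b‖ :=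
      hBconvex.norm_image_sub_le_of_norm_fderiv_le (fun x _ => hdiff x)
        (fun x hx => (hLy x hx).trans (le_max_left _ _)) hb ha
    calc |K y a - K y b| = ‖K y a - K y b‖ := rfl
      _ ≤ max Ly 0 * ‖a - b‖ := this
  have hMy : ∀ y : Fin d, ∃ My : ℝ, 0 ≤ My ∧ ∀ a ∈ B, |K y a| ≤ My := by
    intro y
    obtain ⟨My, hMy⟩ := hBcompact.exists_bound_of_continuousOn (hK y).continuous.continuousOn
    exact ⟨max My 0, le_max_right _ _, fun a ha => (hMy a ha).trans (le_max_left _ _)⟩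
  choose L0 hL0 hL0' using hLy
  choose M0 hM0 hM0' using hMy
  refine ⟨∑ y, L0 y, ∑ y, M0 y, Finset.sum_nonneg fun y _ => hL0 y,
    Finset.sum_nonneg fun y _ => hM0 y, ?_, ?_⟩
  · intro y a ha b hb
    have h1 : |K y a - K y b| ≤ L0 y * ‖a - b‖ := hL0' y a (hsub ha) b (hsub hb)
    have h2 : ‖a - b‖ ≤ ∑ z, |a z - b z| := by
      rw [pi_norm_le_iff_of_nonneg (Finset.sum_nonneg fun z _ => abs_nonneg _)]
      intro z
      calc ‖a z - b z‖ = |a z - b z| := rfl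
        _ ≤ ∑ w, |a w - b w| :=
          Finset.single_le_sum (f := fun w => |a w - b w|) (fun w _ => abs_nonneg _)
            (Finset.mem_univ z)
    calc |K y a - K y b| ≤ L0 y * ‖a - b‖ := h1
      _ ≤ L0 y * ∑ z, |a z - b z| := mul_le_mul_of_nonneg_left h2 (hL0 y)
      _ ≤ (∑ w, L0 w) * ∑ z, |a z - b z| := by
          apply mul_le_mul_of_nonneg_right _ (Finset.sum_nonneg fun z _ => abs_nonneg _)
          exact Finset.single_le_sum (fun w _ => hL0 w) (Finset.mem_univ y)
  · intro y a ha
    calc |K y a| ≤ M0 y := hM0' y a (hsub ha)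
      _ ≤ ∑ w, M0 w := Finset.single_le_sum (fun w _ => hM0 w) (Finset.mem_univ y)

lemma sqrt_one_div_tendsto :
    Tendsto (fun N : ℕ => Real.sqrt (1 / N)) atTop (nhds 0) := by
  have h1 : Tendsto (fun N : ℕ => (1:ℝ) / N) atTop (nhds 0) :=
    tendsto_one_div_atTop_nhds_zero_nat
  have h2 : Tendsto (fun N : ℕ => Real.sqrt ((1:ℝ)/N)) atTop (nhds (Real.sqrt 0)) :=
    (Real.continuous_sqrt.tendsto 0).comp h1
  rw [Real.sqrt_zero] at h2
  exact h2

lemma log_succ_div_tendsto :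
    Tendsto (fun N : ℕ => Real.log (N + 1) / N) atTop (nhds 0) := by
  have h0 : Tendsto (fun x : ℝ => Real.log x / x) atTop (nhds 0) :=
    Real.isLittleO_log_id_atTop.tendsto_div_nhds_zero
  have hmap : Tendsto (fun N : ℕ => ((N:ℝ) + 1)) atTop atTop :=
    tendsto_atTop_add_const_right _ 1 tendsto_natCast_atTop_atTop
  have h1 : Tendsto (fun N : ℕ => Real.log ((N:ℝ)+1) / ((N:ℝ)+1)) atTop (nhds 0) :=
    h0.comp hmap
  have h2 : Tendsto (fun N : ℕ => ((N:ℝ)+1) / N) atTop (nhds 1) := by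
    have : Tendsto (fun N : ℕ => 1 + (1:ℝ)/N) atTop (nhds (1 + 0)) :=
      tendsto_const_nhds.add tendsto_one_div_atTop_nhds_zero_nat
    rw [add_zero] at this
    apply this.congr'
    filter_upwards [eventually_ge_atTop 1] with N hN
    have hNR : (N:ℝ) ≠ 0 := Nat.cast_ne_zero.mpr (by omega)
    field_simp
  have h3 := h1.mul h2
  rw [zero_mul] at h3
  apply h3.congr'
  filter_upwards [eventually_ge_atTop 1] with N hN
  have hNR : (N:ℝ) ≠ 0 := Nat.cast_ne_zero.mpr (by omega)
  have hN1 : ((N:ℝ)+1) ≠ 0 := by positivity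
  field_simp

lemma pointwise_G_bound (K : Fin d → (Fin d → ℝ) → ℝ) (L M : ℝ)
    (hLip : ∀ y : Fin d, ∀ a ∈ stdSimplex ℝ (Fin d), ∀ b ∈ stdSimplex ℝ (Fin d),
      |K y a - K y b| ≤ L * ∑ z, |a z - b z|)
    (hBd : ∀ y : Fin d, ∀ a ∈ stdSimplex ℝ (Fin d), |K y a| ≤ M)
    {r q : Fin d → ℝ} (hr : r ∈ stdSimplex ℝ (Fin d)) (hq : q ∈ stdSimplex ℝ (Fin d)) :
    |(∑ y, r y * K y r) - ∑ y, q y * K y q|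
      ≤ ((d : ℝ) * L + M) * ∑ z, |r z - q z| := by
  have hsumabs : 0 ≤ ∑ z, |r z - q z| := Finset.sum_nonneg fun z _ => abs_nonneg _
  have hrle1 : ∀ y, r y ≤ 1 := by
    intro y
    rw [← hr.2]
    exact Finset.single_le_sum (fun w _ => hr.1 w) (Finset.mem_univ y)
  calc |(∑ y, r y * K y r) - ∑ y, q y * K y q|
      = |∑ y, (r y * K y r - q y * K y q)| := by rw [Finset.sum_sub_distrib]
    _ ≤ ∑ y, |r y * K y r - q y * K y q| := Finset.abs_sum_le_sum_abs _ _
    _ ≤ ∑ y, (L * ∑ z, |r z - q z| + M * |r y - q y|) := by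
        apply Finset.sum_le_sum
        intro y _
        have hdec : r y * K y r - q y * K y q
            = r y * (K y r - K y q) + (r y - q y) * K y q := by ring
        rw [hdec]
        calc |r y * (K y r - K y q) + (r y - q y) * K y q|
            ≤ |r y * (K y r - K y q)| + |(r y - q y) * K y q| := abs_add_le _ _
          _ = r y * |K y r - K y q| + |r y - q y| * |K y q| := by
              rw [abs_mul, abs_mul, abs_of_nonneg (hr.1 y)]
          _ ≤ 1 * (L * ∑ z, |r z - q z|) + |r y - q y| * M := by
              apply add_le_add
              · exact mul_le_mul (hrle1 y) (hLip y r hr q hq) (abs_nonneg _) zero_le_one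
              · exact mul_le_mul_of_nonneg_left (hBd y q hq) (abs_nonneg _)
          _ = L * ∑ z, |r z - q z| + M * |r y - q y| := by ring
    _ = (d : ℝ) * (L * ∑ z, |r z - q z|) + M * ∑ y, |r y - q y| := by
        rw [Finset.sum_add_distrib, Finset.sum_const, Finset.card_univ, ← Finset.mul_sum]
        simp [nsmul_eq_mul]
    _ = ((d : ℝ) * L + M) * ∑ z, |r z - q z| := by ring

lemma expect_G_close (K : Fin d → (Fin d → ℝ) → ℝ) (L M : ℝ)
    (hLip : ∀ y : Fin d, ∀ a ∈ stdSimplex ℝ (Fin d), ∀ b ∈ stdSimplex ℝ (Fin d),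
      |K y a - K y b| ≤ L * ∑ z, |a z - b z|)
    (hBd : ∀ y : Fin d, ∀ a ∈ stdSimplex ℝ (Fin d), |K y a| ≤ M)
    (hC : 0 ≤ (d : ℝ) * L + M)
    {q : Fin d → ℝ} (hq : q ∈ stdSimplex ℝ (Fin d)) (hN : N ≠ 0) :
    |(∑ x : Fin N → Fin d, productMeasure q x * ∑ y, empMeasure x y * K y (empMeasure x))
        - ∑ y, q y * K y q|
      ≤ (((d:ℝ) * L + M) * d) * Real.sqrt (1/N) := by
  have hP0 : ∀ x : Fin N → Fin d, 0 ≤ productMeasure q x :=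
    fun x => Finset.prod_nonneg fun i _ => hq.1 (x i)
  have hP1 : ∑ x : Fin N → Fin d, productMeasure q x = 1 := sum_productMeasure hq.2
  set Gq := ∑ y, q y * K y q with hGq
  have e1 : (∑ x : Fin N → Fin d,
        productMeasure q x * ∑ y, empMeasure x y * K y (empMeasure x)) - Gq
      = ∑ x : Fin N → Fin d,
          productMeasure q x * ((∑ y, empMeasure x y * K y (empMeasure x)) - Gq) := by
    simp_rw [mul_sub]
    rw [Finset.sum_sub_distrib, ← Finset.sum_mul, hP1, one_mul]
  rw [e1]
  calc |∑ x : Fin N → Fin d,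
        productMeasure q x * ((∑ y, empMeasure x y * K y (empMeasure x)) - Gq)|
      ≤ ∑ x : Fin N → Fin d,
          |productMeasure q x * ((∑ y, empMeasure x y * K y (empMeasure x)) - Gq)| :=
        Finset.abs_sum_le_sum_abs _ _
    _ = ∑ x : Fin N → Fin d,
          productMeasure q x * |(∑ y, empMeasure x y * K y (empMeasure x)) - Gq| := by
        apply Finset.sum_congr rfl
        intro x _
        rw [abs_mul, abs_of_nonneg (hP0 x)]
    _ ≤ ∑ x : Fin N → Fin d,
          productMeasure q x * (((d : ℝ) * L + M) * ∑ z, |empMeasure x z - q z|) := by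
        apply Finset.sum_le_sum
        intro x _
        exact mul_le_mul_of_nonneg_left
          (pointwise_G_bound K L M hLip hBd (empMeasure_mem x hN) hq) (hP0 x)
    _ = ((d : ℝ) * L + M) * ∑ z, ∑ x : Fin N → Fin d,
          productMeasure q x * |empMeasure x z - q z| := by
        simp_rw [Finset.mul_sum]
        rw [Finset.sum_comm]
        apply Finset.sum_congr rfl
        intro x _
        apply Finset.sum_congr rfl
        intro z _
        ring
    _ ≤ ((d : ℝ) * L + M) * ∑ _z : Fin d, Real.sqrt (1/N) := by
        apply mul_le_mul_of_nonneg_left _ hC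
        apply Finset.sum_le_sum
        intro z _
        apply expect_abs_le (productMeasure q) hP0 hP1 _ (1/(N:ℝ)) (by positivity)
        exact variance_le hq.1 hq.2 hN z
    _ = (((d:ℝ) * L + M) * d) * Real.sqrt (1/N) := by
        rw [Finset.sum_const, Finset.card_univ]
        simp [nsmul_eq_mul]
        ring

lemma expect_G_tendsto (K : Fin d → (Fin d → ℝ) → ℝ) (hK : ∀ y, ContDiff ℝ 2 (K y))
    {q : Fin d → ℝ} (hq : q ∈ stdSimplex ℝ (Fin d)) :
    Tendsto (fun N : ℕ => ∑ x : Fin N → Fin d,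
        productMeasure q x * ∑ y, empMeasure x y * K y (empMeasure x)) atTop
      (nhds (∑ y, q y * K y q)) := by
  obtain ⟨L, M, hL, hM, hLip, hBd⟩ := K_bounds K hK
  have hC : (0:ℝ) ≤ (d : ℝ) * L + M := by positivity
  rw [← tendsto_sub_nhds_zero_iff]
  apply squeeze_zero_norm' (a := fun N : ℕ => (((d:ℝ)*L+M)*d) * Real.sqrt (1/N))
  · filter_upwards [eventually_ge_atTop 1] with N hN
    rw [Real.norm_eq_abs]
    exact expect_G_close K L M hLip hBd hC hq (by omega)
  · have h2 := sqrt_one_div_tendsto.const_mul ((((d:ℝ)*L+M))*d)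
    simpa using h2

lemma logZ_le (K : Fin d → (Fin d → ℝ) → ℝ) (hd0 : 0 < d) (hN : N ≠ 0) (S : ℝ)
    (hS : ∀ r ∈ stdSimplex ℝ (Fin d),
      -(∑ y, r y * K y r) ≤ S + ∑ y, r y * Real.log (r y)) :
    Real.log (∑ z : Fin N → Fin d, Real.exp (-(energyU K z)))
      ≤ (d:ℝ) * Real.log (N+1) + N * S := by
  haveI : Nonempty (Fin d) := Fin.pos_iff_nonempty.mp hd0
  have hpt : ∀ x : Fin N → Fin d, Real.exp (-(energyU K x))
      ≤ Real.exp ((N:ℝ) * S) * ∏ i, empMeasure x (x i) := by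
    intro x
    rw [energy_eq K x hN, prod_emp_eq_exp x hN, ← Real.exp_add]
    apply Real.exp_le_exp.mpr
    have hb := hS (empMeasure x) (empMeasure_mem x hN)
    have h2 := mul_le_mul_of_nonneg_left hb (Nat.cast_nonneg N : (0:ℝ) ≤ N)
    calc -((N:ℝ) * ∑ y, empMeasure x y * K y (empMeasure x))
        = (N:ℝ) * (-(∑ y, empMeasure x y * K y (empMeasure x))) := by ring
      _ ≤ (N:ℝ) * (S + ∑ y, empMeasure x y * Real.log (empMeasure x y)) := h2
      _ = (N:ℝ) * S + ∑ y, (N:ℝ) * (empMeasure x y * Real.log (empMeasure x y)) := by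
          rw [mul_add, Finset.mul_sum]
  have hZpos : 0 < ∑ z : Fin N → Fin d, Real.exp (-(energyU K z)) :=
    Finset.sum_pos (fun z _ => Real.exp_pos _) Finset.univ_nonempty
  have hsum : ∑ z : Fin N → Fin d, Real.exp (-(energyU K z))
      ≤ Real.exp ((N:ℝ) * S) * ((N:ℝ)+1)^d := by
    calc ∑ z : Fin N → Fin d, Real.exp (-(energyU K z))
        ≤ ∑ z : Fin N → Fin d, Real.exp ((N:ℝ) * S) * ∏ i, empMeasure z (z i) :=
          Finset.sum_le_sum fun z _ => hpt z
      _ = Real.exp ((N:ℝ) * S) * ∑ z : Fin N → Fin d, ∏ i, empMeasure z (z i) := by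
          rw [Finset.mul_sum]
      _ ≤ Real.exp ((N:ℝ) * S) * ((N:ℝ)+1)^d :=
          mul_le_mul_of_nonneg_left (sum_prod_emp_le hN) (Real.exp_nonneg _)
  calc Real.log (∑ z : Fin N → Fin d, Real.exp (-(energyU K z)))
      ≤ Real.log (Real.exp ((N:ℝ) * S) * ((N:ℝ)+1)^d) := Real.log_le_log hZpos hsum
    _ = (N:ℝ) * S + (d:ℝ) * Real.log ((N:ℝ)+1) := by
        rw [Real.log_mul (Real.exp_ne_zero _) (by positivity), Real.log_exp,
          Real.log_pow]
    _ = (d:ℝ) * Real.log (N+1) + N * S := by push_cast; ring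

lemma logZ_ge (K : Fin d → (Fin d → ℝ) → ℝ) (hd0 : 0 < d) (hN : N ≠ 0)
    {q : Fin d → ℝ} (hq : q ∈ stdSimplex ℝ (Fin d)) :
    (N:ℝ) * (-(∑ y, q y * Real.log (q y))
        - ∑ x : Fin N → Fin d, productMeasure q x * ∑ y, empMeasure x y * K y (empMeasure x))
      ≤ Real.log (∑ z : Fin N → Fin d, Real.exp (-(energyU K z))) := by
  haveI : Nonempty (Fin d) := Fin.pos_iff_nonempty.mp hd0
  have hP0 : ∀ x : Fin N → Fin d, 0 ≤ productMeasure q x :=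
    fun x => Finset.prod_nonneg fun i _ => hq.1 (x i)
  have hP1 : ∑ x : Fin N → Fin d, productMeasure q x = 1 := sum_productMeasure hq.2
  have h := gibbs_ineq (productMeasure q) hP0 hP1
    (fun z => Real.exp (-(energyU K z))) (fun z => Real.exp_pos _)
  have e : ∀ x : Fin N → Fin d,
      productMeasure q x * Real.log (Real.exp (-(energyU K x)) / productMeasure q x)
      = productMeasure q x * (-(energyU K x)) - productMeasure q x * Real.log (productMeasure q x) := by
    intro x
    rcases eq_or_lt_of_le (hP0 x) with h0 | h0
    · rw [← h0]
      ring
    · rw [Real.log_div (Real.exp_ne_zero _) (ne_of_gt h0), Real.log_exp]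
      ring
  simp_rw [e] at h
  rw [Finset.sum_sub_distrib] at h
  have e2 : ∑ x : Fin N → Fin d, productMeasure q x * (-(energyU K x))
      = -((N:ℝ) * ∑ x : Fin N → Fin d,
          productMeasure q x * ∑ y, empMeasure x y * K y (empMeasure x)) := by
    rw [Finset.mul_sum, ← Finset.sum_neg_distrib]
    apply Finset.sum_congr rfl
    intro x _
    rw [energy_eq K x hN]
    ring
  rw [e2, entropy_product hq.2] at h
  calc (N:ℝ) * (-(∑ y, q y * Real.log (q y))
        - ∑ x : Fin N → Fin d, productMeasure q x * ∑ y, empMeasure x y * K y (empMeasure x))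
      = -((N:ℝ) * ∑ x : Fin N → Fin d,
          productMeasure q x * ∑ y, empMeasure x y * K y (empMeasure x))
        - (N:ℝ) * ∑ y, q y * Real.log (q y) := by ring
    _ ≤ _ := h

lemma tildeF_eq (K : Fin d → (Fin d → ℝ) → ℝ) (hd0 : 0 < d) (hN : N ≠ 0)
    {p : Fin d → ℝ} (hp : p ∈ stdSimplex ℝ (Fin d)) :
    tildeF K N p = (∑ y, p y * Real.log (p y))
      + (∑ x : Fin N → Fin d, productMeasure p x * ∑ y, empMeasure x y * K y (empMeasure x))
      + (1/(N:ℝ)) * Real.log (∑ z : Fin N → Fin d, Real.exp (-(energyU K z))) := by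
  haveI : Nonempty (Fin d) := Fin.pos_iff_nonempty.mp hd0
  have hP0 : ∀ x : Fin N → Fin d, 0 ≤ productMeasure p x :=
    fun x => Finset.prod_nonneg fun i _ => hp.1 (x i)
  have hP1 : ∑ x : Fin N → Fin d, productMeasure p x = 1 := sum_productMeasure hp.2
  have hZpos : 0 < ∑ z : Fin N → Fin d, Real.exp (-(energyU K z)) :=
    Finset.sum_pos (fun z _ => Real.exp_pos _) Finset.univ_nonempty
  have key : ∀ x : Fin N → Fin d,
      productMeasure p x * Real.log (productMeasure p x / gibbsMeasure K x)
      = productMeasure p x * Real.log (productMeasure p x)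
        + productMeasure p x * energyU K x
        + productMeasure p x * Real.log (∑ z : Fin N → Fin d, Real.exp (-(energyU K z))) := by
    intro x
    rcases eq_or_lt_of_le (hP0 x) with h0 | h0
    · rw [← h0]
      ring
    · unfold gibbsMeasure
      have hrw : productMeasure p x
            / (Real.exp (-(energyU K x)) / ∑ z : Fin N → Fin d, Real.exp (-(energyU K z)))
          = productMeasure p x * (∑ z : Fin N → Fin d, Real.exp (-(energyU K z)))
            / Real.exp (-(energyU K x)) := by
        field_simp
      rw [hrw, Real.log_div (by positivity) (Real.exp_ne_zero _),
        Real.log_mul (ne_of_gt h0) (ne_of_gt hZpos), Real.log_exp]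
      ring
  unfold tildeF relEntN
  simp_rw [key]
  rw [Finset.sum_add_distrib, Finset.sum_add_distrib, entropy_product hp.2]
  have eU : ∑ x : Fin N → Fin d, productMeasure p x * energyU K x
      = (N:ℝ) * ∑ x : Fin N → Fin d,
          productMeasure p x * ∑ y, empMeasure x y * K y (empMeasure x) := by
    rw [Finset.mul_sum]
    apply Finset.sum_congr rfl
    intro x _
    rw [energy_eq K x hN]
    ring
  rw [eU, ← Finset.sum_mul, hP1, one_mul]
  have hNR : (N:ℝ) ≠ 0 := Nat.cast_ne_zero.mpr hN
  field_simp

end GibbsAux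

/-- For Gibbs-type systems, for every `p ∈ 𝒫(𝒳)`,
`lim_{N→∞} F̃_N(p) = ∑_x (K(x,p) + log p_x) p_x − C`, where
`C = inf_{q ∈ 𝒫(𝒳)} {∑ q_x log q_x + ∑ K(x,q) q_x}` is a finite constant
independent of `p`. -/
theorem gibbs_relative_entropy_limit
    (d : ℕ) (hd : 2 ≤ d)
    (K : Fin d → (Fin d → ℝ) → ℝ)
    (hK : ∀ x : Fin d, ContDiff ℝ 2 (K x))
    (p : Fin d → ℝ) (hp : p ∈ stdSimplex ℝ (Fin d)) :
    Tendsto (fun N : ℕ => tildeF K N p) atTop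
      (nhds ((∑ x, (K x p + Real.log (p x)) * p x)
        - sInf { v : ℝ | ∃ q ∈ stdSimplex ℝ (Fin d),
            v = ∑ x, q x * Real.log (q x) + ∑ x, K x q * q x })) := by
  classical
  open GibbsAux in
  have hd0 : 0 < d := by omega
  haveI : Nonempty (Fin d) := Fin.pos_iff_nonempty.mp hd0
  have hdR : (d:ℝ) ≠ 0 := Nat.cast_ne_zero.mpr (by omega)
  -- the rate functional
  set φ : (Fin d → ℝ) → ℝ :=
    fun q => ∑ x, q x * Real.log (q x) + ∑ x, K x q * q x with hφ
  have hφcont : ContinuousOn φ (stdSimplex ℝ (Fin d)) := by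
    apply Continuous.continuousOn
    apply Continuous.add
    · exact continuous_finset_sum _ fun y _ =>
        Real.continuous_mul_log.comp (continuous_apply y)
    · exact continuous_finset_sum _ fun y _ =>
        ((hK y).continuous).mul (continuous_apply y)
  have hne : (stdSimplex ℝ (Fin d)).Nonempty := by
    refine ⟨fun _ => (d:ℝ)⁻¹, fun y => by positivity, ?_⟩
    rw [Finset.sum_const, Finset.card_univ, Fintype.card_fin, nsmul_eq_mul]
    field_simp
  obtain ⟨q₀, hq₀mem, hq₀min'⟩ :=
    (isCompact_stdSimplex ℝ (Fin d)).exists_isMinOn hne hφcont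
  have hq₀min : ∀ q ∈ stdSimplex ℝ (Fin d), φ q₀ ≤ φ q := fun q hq => hq₀min' hq
  have hsinf : sInf { v : ℝ | ∃ q ∈ stdSimplex ℝ (Fin d),
      v = ∑ x, q x * Real.log (q x) + ∑ x, K x q * q x } = φ q₀ := by
    apply IsLeast.csInf_eq
    constructor
    · exact ⟨q₀, hq₀mem, rfl⟩
    · rintro v ⟨q, hq, rfl⟩
      exact hq₀min q hq
  have hswap : ∀ q : Fin d → ℝ, (∑ y, q y * K y q) = ∑ y, K y q * q y :=
    fun q => Finset.sum_congr rfl fun y _ => mul_comm _ _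
  -- limit of (1 / N) log Z_N
  have hlogZ : Tendsto (fun N : ℕ =>
      (1/(N:ℝ)) * Real.log (∑ z : Fin N → Fin d, Real.exp (-(energyU K z)))) atTop
      (nhds (-φ q₀)) := by
    have hEG := expect_G_tendsto K hK hq₀mem
    have hlow : Tendsto (fun N : ℕ => -(∑ y, q₀ y * Real.log (q₀ y))
        - ∑ x : Fin N → Fin d, productMeasure q₀ x * ∑ y, empMeasure x y * K y (empMeasure x))
        atTop (nhds (-φ q₀)) := by
      have h := (tendsto_const_nhds
        (x := -(∑ y, q₀ y * Real.log (q₀ y))) (f := atTop (α := ℕ))).sub hEG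
      have : -(∑ y, q₀ y * Real.log (q₀ y)) - (∑ y, q₀ y * K y q₀) = -φ q₀ := by
        simp only [hφ]
        rw [hswap q₀]
        ring
      rwa [this] at h
    have hhigh : Tendsto (fun N : ℕ =>
        (d:ℝ) * (Real.log (N+1) / N) + (-φ q₀)) atTop (nhds (-φ q₀)) := by
      have h := (log_succ_div_tendsto.const_mul (d:ℝ)).add
        (tendsto_const_nhds (x := -φ q₀) (f := atTop (α := ℕ)))
      rwa [mul_zero, zero_add] at h
    apply tendsto_of_tendsto_of_tendsto_of_le_of_le' hlow hhigh
    · filter_upwards [eventually_ge_atTop 1] with N hN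
      have hNne : N ≠ 0 := by omega
      have hNR : (0:ℝ) < N := by exact_mod_cast Nat.pos_of_ne_zero hNne
      have h := logZ_ge K hd0 hNne hq₀mem
      have h2 := mul_le_mul_of_nonneg_left h (le_of_lt (one_div_pos.mpr hNR))
      calc -(∑ y, q₀ y * Real.log (q₀ y))
            - ∑ x : Fin N → Fin d, productMeasure q₀ x * ∑ y, empMeasure x y * K y (empMeasure x)
          = (1/(N:ℝ)) * ((N:ℝ) * (-(∑ y, q₀ y * Real.log (q₀ y))
            - ∑ x : Fin N → Fin d,
                productMeasure q₀ x * ∑ y, empMeasure x y * K y (empMeasure x))) := by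
            field_simp
        _ ≤ (1/(N:ℝ)) * Real.log (∑ z : Fin N → Fin d, Real.exp (-(energyU K z))) := h2
    · filter_upwards [eventually_ge_atTop 1] with N hN
      have hNne : N ≠ 0 := by omega
      have hNR : (0:ℝ) < N := by exact_mod_cast Nat.pos_of_ne_zero hNne
      have hS : ∀ r ∈ stdSimplex ℝ (Fin d),
          -(∑ y, r y * K y r) ≤ (-φ q₀) + ∑ y, r y * Real.log (r y) := by
        intro r hr
        have h1 := hq₀min r hr
        simp only [hφ] at h1 ⊢
        rw [hswap r]
        linarith
      have h := logZ_le K hd0 hNne (-φ q₀) hS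
      have h2 := mul_le_mul_of_nonneg_left h (le_of_lt (one_div_pos.mpr hNR))
      calc (1/(N:ℝ)) * Real.log (∑ z : Fin N → Fin d, Real.exp (-(energyU K z)))
          ≤ (1/(N:ℝ)) * ((d:ℝ) * Real.log (N+1) + (N:ℝ) * (-φ q₀)) := h2
        _ = (d:ℝ) * (Real.log (N+1) / N) + (-φ q₀) := by
            field_simp
  -- assemble
  have hEGp := expect_G_tendsto K hK hp
  have hmain : Tendsto (fun N : ℕ => (∑ y, p y * Real.log (p y))
      + (∑ x : Fin N → Fin d, productMeasure p x * ∑ y, empMeasure x y * K y (empMeasure x))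
      + (1/(N:ℝ)) * Real.log (∑ z : Fin N → Fin d, Real.exp (-(energyU K z)))) atTop
      (nhds ((∑ y, p y * Real.log (p y)) + (∑ y, p y * K y p) + (-φ q₀))) :=
    ((tendsto_const_nhds.add hEGp).add hlogZ)
  have hval : (∑ y, p y * Real.log (p y)) + (∑ y, p y * K y p) + (-φ q₀)
      = (∑ x, (K x p + Real.log (p x)) * p x)
        - sInf { v : ℝ | ∃ q ∈ stdSimplex ℝ (Fin d),
            v = ∑ x, q x * Real.log (q x) + ∑ x, K x q * q x } := by
    rw [hsinf]
    have : ∑ x, (K x p + Real.log (p x)) * p x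
        = (∑ y, p y * Real.log (p y)) + (∑ y, p y * K y p) := by
      rw [← Finset.sum_add_distrib]
      apply Finset.sum_congr rfl
      intro y _
      ring
    rw [this]
    ring
  rw [← hval]
  apply hmain.congr'
  filter_upwards [eventually_ge_atTop 1] with N hN
  exact (tildeF_eq K hd0 (by omega) hp).symm
end

section
/- Let V : 𝒳 → ℝ, W : 𝒳 × 𝒳 → ℝ, β > 0, and set K(x,p) = V(x) + β Σ_{y∈𝒳} W(x,y) p_y. With π_N the Gibbs measure on 𝒳^N associated to K and F̃_N(p) = (1/N) R(⊗^N p ‖ π_N), for every p ∈ 𝒫(𝒳), lim_{N→∞} F̃_N(p) = Σ_{x∈𝒳} ( V(x) + β Σ_{y∈𝒳} W(x,y) p_y + log p_x ) p_x − C, where C = inf_{q∈𝒫(𝒳)} { Σ_x q_x log q_x + Σ_x (V(x) + β Σ_y W(x,y) q_y) q_x } is a finite constant independent of p. -/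
open scoped BigOperators
open Filter

namespace AGaux

variable {d : ℕ}

lemma sum_pi_prod {N : ℕ} (h : Fin N → Fin d → ℝ) :
    ∑ x : Fin N → Fin d, ∏ i, h i (x i) = ∏ i, ∑ a, h i a := by
  rw [Finset.prod_univ_sum, Fintype.piFinset_univ]

lemma marginal_one {N : ℕ} (p : Fin d → ℝ) (hp1 : ∑ a, p a = 1)
    (i : Fin N) (g : Fin d → ℝ) :
    ∑ x : Fin N → Fin d, (∏ k, p (x k)) * g (x i) = ∑ a, p a * g a := by
  have key : ∀ x : Fin N → Fin d,
      (∏ k, p (x k)) * g (x i) = ∏ k, (p (x k) * if k = i then g (x k) else 1) := by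
    intro x
    rw [Finset.prod_mul_distrib, Finset.prod_ite_eq' Finset.univ i (fun k => g (x k))]
    simp
  simp_rw [key]
  rw [sum_pi_prod (fun k a => p a * if k = i then g a else 1)]
  rw [Finset.prod_eq_single i]
  · simp
  · intro k _ hk
    simp [hk, hp1]
  · simp

lemma marginal_two {N : ℕ} (p : Fin d → ℝ) (hp1 : ∑ a, p a = 1)
    (i j : Fin N) (hij : i ≠ j) (g : Fin d → Fin d → ℝ) :
    ∑ x : Fin N → Fin d, (∏ k, p (x k)) * g (x i) (x j)
      = ∑ a, ∑ b, p a * p b * g a b := by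
  have expand : ∀ x : Fin N → Fin d,
      (∏ k, p (x k)) * g (x i) (x j)
        = ∑ a, ∑ b, g a b * ∏ k, (p (x k) * ((if k = i then (if x k = a then 1 else 0) else 1)
            * (if k = j then (if x k = b then 1 else 0) else 1))) := by
    intro x
    have hprod : ∀ a b, (∏ k, (p (x k) * ((if k = i then (if x k = a then (1:ℝ) else 0) else 1)
            * (if k = j then (if x k = b then 1 else 0) else 1))))
        = (∏ k, p (x k)) * ((if x i = a then 1 else 0) * (if x j = b then 1 else 0)) := by
      intro a b
      rw [Finset.prod_mul_distrib, Finset.prod_mul_distrib]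
      rw [Finset.prod_ite_eq' Finset.univ i (fun k => if x k = a then (1:ℝ) else 0)]
      rw [Finset.prod_ite_eq' Finset.univ j (fun k => if x k = b then (1:ℝ) else 0)]
      simp
    simp_rw [hprod]
    simp [mul_ite, mul_one, mul_zero, Finset.sum_ite_eq]
    ring
  simp_rw [expand]
  rw [Finset.sum_comm]
  refine Finset.sum_congr rfl (fun a _ => ?_)
  rw [Finset.sum_comm]
  refine Finset.sum_congr rfl (fun b _ => ?_)
  rw [← Finset.mul_sum]
  rw [sum_pi_prod (fun k c => p c * ((if k = i then (if c = a then 1 else 0) else 1)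
      * (if k = j then (if c = b then 1 else 0) else 1)))]
  have : ∀ k, (∑ c, p c * ((if k = i then (if c = a then (1:ℝ) else 0) else 1)
      * (if k = j then (if c = b then 1 else 0) else 1)))
      = if k = i then p a else if k = j then p b else 1 := by
    intro k
    by_cases hki : k = i
    · subst hki
      simp [hij, mul_ite, mul_one, mul_zero, Finset.sum_ite_eq']
    · by_cases hkj : k = j
      · subst hkj
        simp [hki, mul_ite, mul_one, mul_zero, Finset.sum_ite_eq']
      · simp [hki, hkj, hp1]
  rw [Finset.prod_congr rfl (fun k _ => this k)]
  have hji : j ∈ (Finset.univ : Finset (Fin N)).erase i := by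
    simp [Ne.symm hij]
  rw [← Finset.mul_prod_erase Finset.univ _ (Finset.mem_univ i),
      ← Finset.mul_prod_erase _ _ hji]
  rw [Finset.prod_eq_one (fun k hk => ?_)]
  · simp [Ne.symm hij]
    ring
  · have hki : k ≠ i := Finset.ne_of_mem_erase (Finset.mem_of_mem_erase hk)
    have hkj : k ≠ j := Finset.ne_of_mem_erase hk
    simp [hki, hkj]

end AGaux

namespace AGaux2
open AGaux

variable {d : ℕ}

noncomputable def Ent (q : Fin d → ℝ) : ℝ := ∑ a, q a * Real.log (q a)

lemma sum_prodMeasure {N : ℕ} (p : Fin d → ℝ) (hp1 : ∑ a, p a = 1) :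
    ∑ x : Fin N → Fin d, ∏ i, p (x i) = 1 := by
  rw [sum_pi_prod (fun _ a => p a)]
  simp [hp1]

lemma entropy_tensor {N : ℕ} (p : Fin d → ℝ) (hp1 : ∑ a, p a = 1) :
    ∑ x : Fin N → Fin d, (∏ i, p (x i)) * Real.log (∏ i, p (x i))
      = N * Ent p := by
  have step : ∀ x : Fin N → Fin d,
      (∏ i, p (x i)) * Real.log (∏ i, p (x i))
        = ∑ i, (∏ k, p (x k)) * Real.log (p (x i)) := by
    intro x
    by_cases h : ∏ i, p (x i) = 0
    · simp [h]
    · have hne : ∀ i ∈ Finset.univ, p (x i) ≠ 0 := by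
        intro i _
        exact fun hz => h (Finset.prod_eq_zero (Finset.mem_univ i) hz)
      rw [Real.log_prod hne, Finset.mul_sum]
  simp_rw [step]
  rw [Finset.sum_comm]
  have : ∀ i : Fin N, ∑ x : Fin N → Fin d, (∏ k, p (x k)) * Real.log (p (x i)) = Ent p :=
    fun i => marginal_one p hp1 i (fun a => Real.log (p a))
  rw [Finset.sum_congr rfl (fun i _ => this i)]
  simp [mul_comm]

lemma energyU_eq {N : ℕ} (V : Fin d → ℝ) (W : Fin d → Fin d → ℝ) (β : ℝ)
    (K : Fin d → (Fin d → ℝ) → ℝ)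
    (hK : ∀ x : Fin d, ∀ q : Fin d → ℝ, K x q = V x + β * ∑ y, W x y * q y)
    (x : Fin N → Fin d) :
    energyU K x = (∑ i, V (x i)) + (β / N) * ∑ i, ∑ j, W (x i) (x j) := by
  unfold energyU
  simp_rw [hK, empMeasure]
  rw [Finset.sum_add_distrib]
  congr 1
  have inner : ∀ a : Fin d,
      (∑ y, W a y * ((1 / (N:ℝ)) * ∑ j, if x j = y then 1 else 0))
        = (1 / (N:ℝ)) * ∑ j, W a (x j) := by
    intro a
    have : ∀ y, W a y * ((1 / (N:ℝ)) * ∑ j, if x j = y then 1 else 0)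
        = (1 / (N:ℝ)) * ∑ j, if x j = y then W a y else 0 := by
      intro y
      rw [Finset.mul_sum, Finset.mul_sum, Finset.mul_sum]
      refine Finset.sum_congr rfl (fun j _ => ?_)
      by_cases h : x j = y <;> simp [h] <;> ring
    simp_rw [this]
    rw [← Finset.mul_sum]
    congr 1
    rw [Finset.sum_comm]
    refine Finset.sum_congr rfl (fun j _ => ?_)
    have : ∀ y, (if x j = y then W a y else 0) = if x j = y then W a (x j) else 0 := by
      intro y
      by_cases h : x j = y <;> simp [h]
    rw [Finset.sum_congr rfl (fun y _ => this y), Finset.sum_ite_eq Finset.univ (x j) (fun _ => W a (x j))]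
    simp
  simp_rw [inner]
  rw [Finset.mul_sum]
  refine Finset.sum_congr rfl (fun i _ => ?_)
  ring

lemma expectation_energy {N : ℕ} (hN : 1 ≤ N) (V : Fin d → ℝ) (W : Fin d → Fin d → ℝ)
    (β : ℝ) (K : Fin d → (Fin d → ℝ) → ℝ)
    (hK : ∀ x : Fin d, ∀ q : Fin d → ℝ, K x q = V x + β * ∑ y, W x y * q y)
    (p : Fin d → ℝ) (hp1 : ∑ a, p a = 1) :
    ∑ x : Fin N → Fin d, (∏ i, p (x i)) * energyU K x
      = N * (∑ a, p a * V a) + β * (∑ a, p a * W a a)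
        + β * ((N:ℝ) - 1) * (∑ a, ∑ b, p a * p b * W a b) := by
  have hNne : (N:ℝ) ≠ 0 := by positivity
  simp_rw [energyU_eq V W β K hK, mul_add]
  rw [Finset.sum_add_distrib]
  have part1 : ∑ x : Fin N → Fin d, (∏ i, p (x i)) * ∑ i, V (x i)
      = N * (∑ a, p a * V a) := by
    simp_rw [Finset.mul_sum]
    rw [Finset.sum_comm]
    rw [Finset.sum_congr rfl (fun i _ => marginal_one p hp1 i V)]
    rw [Finset.sum_const, Finset.card_univ]
    simp only [Fintype.card_fin, nsmul_eq_mul]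
    rw [Finset.mul_sum]
  have part2 : ∑ x : Fin N → Fin d, (∏ i, p (x i)) * ((β / N) * ∑ i, ∑ j, W (x i) (x j))
      = β * (∑ a, p a * W a a) + β * ((N:ℝ) - 1) * (∑ a, ∑ b, p a * p b * W a b) := by
    have rearr : ∀ x : Fin N → Fin d, (∏ i, p (x i)) * ((β / N) * ∑ i, ∑ j, W (x i) (x j))
        = (β / N) * ∑ i, ∑ j, (∏ k, p (x k)) * W (x i) (x j) := by
      intro x
      simp only [Finset.mul_sum]
      refine Finset.sum_congr rfl (fun i _ => ?_)
      refine Finset.sum_congr rfl (fun j _ => ?_)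
      ring
    simp_rw [rearr]
    rw [← Finset.mul_sum]
    have swap1 : (∑ x : Fin N → Fin d, ∑ i : Fin N, ∑ j : Fin N, (∏ k, p (x k)) * W (x i) (x j))
        = ∑ i : Fin N, ∑ j : Fin N, ∑ x : Fin N → Fin d, (∏ k, p (x k)) * W (x i) (x j) := by
      rw [Finset.sum_comm]
      exact Finset.sum_congr rfl (fun i _ => Finset.sum_comm)
    rw [swap1]
    have inner : ∀ i : Fin N, ∑ j : Fin N, ∑ x : Fin N → Fin d, (∏ k, p (x k)) * W (x i) (x j)
        = (N:ℝ) * (∑ a, ∑ b, p a * p b * W a b)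
          + ((∑ a, p a * W a a) - (∑ a, ∑ b, p a * p b * W a b)) := by
      intro i
      have : ∀ j : Fin N, ∑ x : Fin N → Fin d, (∏ k, p (x k)) * W (x i) (x j)
          = (∑ a, ∑ b, p a * p b * W a b)
            + (if i = j then (∑ a, p a * W a a) - (∑ a, ∑ b, p a * p b * W a b) else 0) := by
        intro j
        by_cases h : i = j
        · subst h
          rw [marginal_one p hp1 i (fun a => W a a)]
          simp
        · rw [marginal_two p hp1 i j h W]
          simp [h]
      rw [Finset.sum_congr rfl (fun j _ => this j)]
      rw [Finset.sum_add_distrib, Finset.sum_ite_eq Finset.univ i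
        (fun _ => (∑ a, p a * W a a) - (∑ a, ∑ b, p a * p b * W a b))]
      simp [mul_comm]
    rw [Finset.sum_congr rfl (fun i _ => inner i)]
    rw [Finset.sum_const]
    simp only [Finset.card_univ, Fintype.card_fin, nsmul_eq_mul]
    field_simp
    ring
  rw [part1, part2]
  ring

end AGaux2

namespace AGaux3
open AGaux AGaux2

variable {d : ℕ}

noncomputable def Phi (V : Fin d → ℝ) (W : Fin d → Fin d → ℝ) (β : ℝ) (q : Fin d → ℝ) : ℝ :=
  (∑ a, q a * V a) + β * ∑ a, ∑ b, q a * q b * W a b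

noncomputable def Zed (d : ℕ) (K : Fin d → (Fin d → ℝ) → ℝ) (N : ℕ) : ℝ :=
  ∑ z : Fin N → Fin d, Real.exp (-(energyU K z))

lemma Zed_pos (hd : 0 < d) (K : Fin d → (Fin d → ℝ) → ℝ) (N : ℕ) : 0 < Zed d K N := by
  have : Nonempty (Fin d) := ⟨⟨0, hd⟩⟩
  exact Finset.sum_pos (fun z _ => Real.exp_pos _) Finset.univ_nonempty

lemma relEnt_formula {N : ℕ} (K : Fin d → (Fin d → ℝ) → ℝ) (hd : 0 < d)
    (p : Fin d → ℝ) (hp0 : ∀ a, 0 ≤ p a) (hp1 : ∑ a, p a = 1) :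
    relEntN (productMeasure p) (gibbsMeasure (N := N) K)
      = (∑ x : Fin N → Fin d, productMeasure p x * Real.log (productMeasure p x))
        + (∑ x : Fin N → Fin d, productMeasure p x * energyU K x)
        + Real.log (Zed d K N) := by
  have hZ : 0 < Zed d K N := Zed_pos hd K N
  unfold relEntN gibbsMeasure
  have key : ∀ x : Fin N → Fin d,
      productMeasure p x * Real.log (productMeasure p x / (Real.exp (-(energyU K x)) / Zed d K N))
        = productMeasure p x * Real.log (productMeasure p x)
          + productMeasure p x * energyU K x
          + productMeasure p x * Real.log (Zed d K N) := by
    intro x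
    by_cases h : productMeasure p x = 0
    · simp [h]
    · have hQ : Real.exp (-(energyU K x)) / Zed d K N ≠ 0 := by
        positivity
      rw [Real.log_div h hQ, Real.log_div (Real.exp_ne_zero _) (ne_of_gt hZ), Real.log_exp]
      ring
  calc ∑ x : Fin N → Fin d, productMeasure p x
          * Real.log (productMeasure p x / (Real.exp (-(energyU K x)) / ∑ z, Real.exp (-(energyU K z))))
      = ∑ x : Fin N → Fin d, (productMeasure p x * Real.log (productMeasure p x)
          + productMeasure p x * energyU K x
          + productMeasure p x * Real.log (Zed d K N)) := Finset.sum_congr rfl (fun x _ => key x)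
    _ = _ := by
        rw [Finset.sum_add_distrib, Finset.sum_add_distrib, ← Finset.sum_mul]
        have : ∑ x : Fin N → Fin d, productMeasure p x = 1 := sum_prodMeasure p hp1
        rw [this, one_mul]

lemma empMeasure_nonneg {N : ℕ} (x : Fin N → Fin d) (a : Fin d) : 0 ≤ empMeasure x a := by
  unfold empMeasure
  positivity

lemma empMeasure_sum {N : ℕ} (hN : 1 ≤ N) (x : Fin N → Fin d) :
    ∑ a, empMeasure x a = 1 := by
  unfold empMeasure
  rw [← Finset.mul_sum, Finset.sum_comm]
  have : ∀ i : Fin N, ∑ a : Fin d, (if x i = a then (1:ℝ) else 0) = 1 := by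
    intro i
    rw [Finset.sum_ite_eq Finset.univ (x i) (fun _ => (1:ℝ))]
    simp
  rw [Finset.sum_congr rfl (fun i _ => this i), Finset.sum_const]
  simp only [Finset.card_univ, Fintype.card_fin, nsmul_eq_mul, mul_one]
  have : (N:ℝ) ≠ 0 := by positivity
  field_simp

lemma empMeasure_pos_at {N : ℕ} (x : Fin N → Fin d) (i : Fin N) :
    0 < empMeasure x (x i) := by
  unfold empMeasure
  have hN : 0 < N := Fin.pos i
  apply mul_pos
  · have : (0:ℝ) < N := by exact_mod_cast hN
    positivity
  · apply Finset.sum_pos' (fun j _ => by positivity)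
    exact ⟨i, Finset.mem_univ i, by simp⟩

lemma emp_avg {N : ℕ} (x : Fin N → Fin d) (f : Fin d → ℝ) :
    ∑ a, empMeasure x a * f a = (1 / (N:ℝ)) * ∑ i, f (x i) := by
  unfold empMeasure
  have : ∀ a : Fin d, (1 / (N:ℝ)) * (∑ i, if x i = a then (1:ℝ) else 0) * f a
      = (1 / (N:ℝ)) * ∑ i, (if x i = a then f a else 0) := by
    intro a
    rw [mul_assoc, Finset.sum_mul]
    congr 1
    refine Finset.sum_congr rfl (fun i _ => ?_)
    by_cases h : x i = a <;> simp [h]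
  rw [Finset.sum_congr rfl (fun a _ => this a), ← Finset.mul_sum]
  congr 1
  rw [Finset.sum_comm]
  refine Finset.sum_congr rfl (fun i _ => ?_)
  have : ∀ a, (if x i = a then f a else 0) = if x i = a then f (x i) else 0 := by
    intro a
    by_cases h : x i = a <;> simp [h]
  rw [Finset.sum_congr rfl (fun a _ => this a),
    Finset.sum_ite_eq Finset.univ (x i) (fun _ => f (x i))]
  simp

lemma energy_phi {N : ℕ} (V : Fin d → ℝ) (W : Fin d → Fin d → ℝ) (β : ℝ)
    (K : Fin d → (Fin d → ℝ) → ℝ)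
    (hK : ∀ x : Fin d, ∀ q : Fin d → ℝ, K x q = V x + β * ∑ y, W x y * q y)
    (hN : 1 ≤ N) (x : Fin N → Fin d) :
    energyU K x = N * Phi V W β (empMeasure x) := by
  have hNne : (N:ℝ) ≠ 0 := by positivity
  rw [energyU_eq V W β K hK x]
  unfold Phi
  rw [emp_avg x V]
  have hdouble : ∑ a, ∑ b, empMeasure x a * empMeasure x b * W a b
      = (1/(N:ℝ)) * ∑ i, ((1/(N:ℝ)) * ∑ j, W (x i) (x j)) := by
    have inner : ∀ a, ∑ b, empMeasure x a * empMeasure x b * W a b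
        = empMeasure x a * ((1/(N:ℝ)) * ∑ j, W a (x j)) := by
      intro a
      rw [← emp_avg x (fun b => W a b), Finset.mul_sum]
      refine Finset.sum_congr rfl (fun b _ => ?_)
      ring
    rw [Finset.sum_congr rfl (fun a _ => inner a)]
    exact emp_avg x (fun a => (1/(N:ℝ)) * ∑ j, W a (x j))
  rw [hdouble]
  rw [← Finset.mul_sum]
  field_simp

lemma entropy_emp {N : ℕ} (hN : 1 ≤ N) (x : Fin N → Fin d) :
    (N:ℝ) * Ent (empMeasure x) = ∑ i, Real.log (empMeasure x (x i)) := by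
  have hNne : (N:ℝ) ≠ 0 := by positivity
  unfold Ent
  rw [emp_avg x (fun a => Real.log (empMeasure x a))]
  field_simp

lemma card_emp_image {N : ℕ} (hN : 1 ≤ N) :
    ((Finset.univ : Finset (Fin N → Fin d)).image
      (fun x => empMeasure x)).card ≤ (N+1)^d := by
  classical
  set c : (Fin N → Fin d) → (Fin d → ℕ) :=
    fun x a => (Finset.univ.filter (fun i => x i = a)).card with hc
  set g : (Fin d → ℕ) → (Fin d → ℝ) := fun n a => (1/(N:ℝ)) * n a with hg
  have hcomp : ∀ x : Fin N → Fin d, empMeasure x = g (c x) := by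
    intro x
    funext a
    unfold empMeasure
    simp only [hg, hc]
    congr 1
    rw [Finset.sum_boole]
  have him : (Finset.univ : Finset (Fin N → Fin d)).image (fun x => empMeasure x)
      = ((Finset.univ : Finset (Fin N → Fin d)).image c).image g := by
    rw [Finset.image_image]
    exact Finset.image_congr (fun x _ => hcomp x)
  rw [him]
  calc (((Finset.univ : Finset (Fin N → Fin d)).image c).image g).card
      ≤ ((Finset.univ : Finset (Fin N → Fin d)).image c).card := Finset.card_image_le
    _ ≤ (Fintype.piFinset (fun _ : Fin d => Finset.range (N+1))).card := by
        apply Finset.card_le_card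
        intro n hn
        rw [Finset.mem_image] at hn
        obtain ⟨x, _, rfl⟩ := hn
        rw [Fintype.mem_piFinset]
        intro a
        rw [Finset.mem_range]
        have : c x a ≤ N := by
          simp only [hc]
          calc _ ≤ (Finset.univ : Finset (Fin N)).card := Finset.card_filter_le _ _
            _ = N := by simp
        omega
    _ = (N+1)^d := by
        rw [Fintype.card_piFinset]
        simp

lemma Z_upper {N : ℕ} (hN : 1 ≤ N) (V : Fin d → ℝ) (W : Fin d → Fin d → ℝ) (β : ℝ)
    (K : Fin d → (Fin d → ℝ) → ℝ)
    (hK : ∀ x : Fin d, ∀ q : Fin d → ℝ, K x q = V x + β * ∑ y, W x y * q y)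
    (C : ℝ) (hC : ∀ r ∈ stdSimplex ℝ (Fin d), C ≤ Ent r + Phi V W β r) :
    Zed d K N ≤ ((N:ℝ)+1)^d * Real.exp (-(N:ℝ) * C) := by
  classical
  set img := (Finset.univ : Finset (Fin N → Fin d)).image (fun x => empMeasure x) with himg
  have hfib : Zed d K N = ∑ r ∈ img, ∑ x ∈ Finset.univ.filter (fun x : Fin N → Fin d => empMeasure x = r),
      Real.exp (-(energyU K x)) := by
    unfold Zed
    rw [Finset.sum_fiberwise_of_maps_to (fun x _ => Finset.mem_image_of_mem _ (Finset.mem_univ x))]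
  rw [hfib]
  have inner_le : ∀ r ∈ img, (∑ x ∈ Finset.univ.filter (fun x : Fin N → Fin d => empMeasure x = r),
      Real.exp (-(energyU K x))) ≤ Real.exp (-(N:ℝ) * C) := by
    intro r hr
    rw [Finset.mem_image] at hr
    obtain ⟨x₀, _, hx₀⟩ := hr
    have hrsimplex : r ∈ stdSimplex ℝ (Fin d) := by
      refine ⟨fun a => ?_, ?_⟩
      · rw [← hx₀]; exact empMeasure_nonneg x₀ a
      · rw [← hx₀]; exact empMeasure_sum hN x₀
    have hterm : ∀ x ∈ Finset.univ.filter (fun x : Fin N → Fin d => empMeasure x = r),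
        Real.exp (-(energyU K x)) ≤ Real.exp (-(N:ℝ) * C) * ∏ i, r (x i) := by
      intro x hx
      rw [Finset.mem_filter] at hx
      have hxr : empMeasure x = r := hx.2
      have hE : energyU K x = N * Phi V W β r := by
        rw [energy_phi V W β K hK hN x, hxr]
      have hEnt : (N:ℝ) * Ent r = ∑ i, Real.log (r (x i)) := by
        rw [← hxr]
        exact entropy_emp hN x
      have hprod : Real.exp ((N:ℝ) * Ent r) = ∏ i, r (x i) := by
        rw [hEnt, Real.exp_sum]
        refine Finset.prod_congr rfl (fun i _ => ?_)
        rw [Real.exp_log]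
        rw [← hxr]
        exact empMeasure_pos_at x i
      rw [hE, ← hprod, ← Real.exp_add]
      apply Real.exp_le_exp.2
      have h1 := hC r hrsimplex
      have hNr : (1:ℝ) ≤ (N:ℝ) := by exact_mod_cast hN
      nlinarith [h1, hNr]
    calc (∑ x ∈ Finset.univ.filter (fun x : Fin N → Fin d => empMeasure x = r),
          Real.exp (-(energyU K x)))
        ≤ ∑ x ∈ Finset.univ.filter (fun x : Fin N → Fin d => empMeasure x = r),
            Real.exp (-(N:ℝ) * C) * ∏ i, r (x i) := Finset.sum_le_sum hterm
      _ ≤ ∑ x : Fin N → Fin d, Real.exp (-(N:ℝ) * C) * ∏ i, r (x i) := by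
          apply Finset.sum_le_sum_of_subset_of_nonneg (Finset.filter_subset _ _)
          intro x _ _
          have : 0 ≤ ∏ i, r (x i) := Finset.prod_nonneg (fun i _ => hrsimplex.1 (x i))
          positivity
      _ = Real.exp (-(N:ℝ) * C) := by
          rw [← Finset.mul_sum, sum_prodMeasure r hrsimplex.2, mul_one]
  calc (∑ r ∈ img, ∑ x ∈ Finset.univ.filter (fun x : Fin N → Fin d => empMeasure x = r),
        Real.exp (-(energyU K x)))
      ≤ ∑ _r ∈ img, Real.exp (-(N:ℝ) * C) := Finset.sum_le_sum inner_le
    _ = img.card * Real.exp (-(N:ℝ) * C) := by rw [Finset.sum_const, nsmul_eq_mul]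
    _ ≤ ((N:ℝ)+1)^d * Real.exp (-(N:ℝ) * C) := by
        apply mul_le_mul_of_nonneg_right _ (Real.exp_pos _).le
        calc (img.card : ℝ) ≤ ((N+1)^d : ℕ) := by
              exact_mod_cast card_emp_image hN
          _ = ((N:ℝ)+1)^d := by push_cast; ring

lemma Z_lower {N : ℕ} (hd : 0 < d) (hN : 1 ≤ N) (V : Fin d → ℝ) (W : Fin d → Fin d → ℝ)
    (β : ℝ) (K : Fin d → (Fin d → ℝ) → ℝ)
    (hK : ∀ x : Fin d, ∀ q : Fin d → ℝ, K x q = V x + β * ∑ y, W x y * q y)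
    (q : Fin d → ℝ) (hq1 : ∑ a, q a = 1) (hqpos : ∀ a, 0 < q a) :
    -((N:ℝ) * (Ent q + Phi V W β q))
      + β * ((∑ a, ∑ b, q a * q b * W a b) - ∑ a, q a * W a a)
      ≤ Real.log (Zed d K N) := by
  set w : (Fin N → Fin d) → ℝ := fun x => ∏ i, q (x i) with hw
  have hwpos : ∀ x, 0 < w x := fun x => Finset.prod_pos (fun i _ => hqpos (x i))
  have hwsum : ∑ x : Fin N → Fin d, w x = 1 := sum_prodMeasure q hq1
  set t : (Fin N → Fin d) → ℝ := fun x => -(energyU K x) - Real.log (w x) with ht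
  have jensen : Real.exp (∑ x : Fin N → Fin d, w x * t x)
      ≤ ∑ x : Fin N → Fin d, w x * Real.exp (t x) := by
    have := convexOn_exp.map_sum_le (t := Finset.univ) (w := w) (p := t)
      (fun x _ => (hwpos x).le) hwsum (fun x _ => Set.mem_univ _)
    simpa [smul_eq_mul] using this
  have hZeq : ∑ x : Fin N → Fin d, w x * Real.exp (t x) = Zed d K N := by
    unfold Zed
    refine Finset.sum_congr rfl (fun x _ => ?_)
    rw [ht]
    simp only
    have hinv : Real.exp (-Real.log (w x)) = (w x)⁻¹ := by
      rw [Real.exp_neg, Real.exp_log (hwpos x)]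
    rw [sub_eq_add_neg, Real.exp_add, hinv]
    field_simp
    rw [div_self (hwpos x).ne']
  have hle : Real.exp (∑ x : Fin N → Fin d, w x * t x) ≤ Zed d K N := by
    rw [← hZeq]; exact jensen
  have hlog : ∑ x : Fin N → Fin d, w x * t x ≤ Real.log (Zed d K N) := by
    rw [← Real.log_exp (∑ x : Fin N → Fin d, w x * t x)]
    exact Real.log_le_log (Real.exp_pos _) hle
  refine le_trans (le_of_eq ?_) hlog
  have hsplit : ∑ x : Fin N → Fin d, w x * t x
      = -(∑ x : Fin N → Fin d, w x * energyU K x)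
        - ∑ x : Fin N → Fin d, w x * Real.log (w x) := by
    rw [← Finset.sum_neg_distrib, ← Finset.sum_sub_distrib]
    refine Finset.sum_congr rfl (fun x _ => ?_)
    rw [ht]
    ring
  rw [hsplit]
  have hE := expectation_energy hN V W β K hK q hq1
  have hEnt := entropy_tensor (N := N) q hq1
  rw [hw] at *
  rw [hE, hEnt]
  unfold Phi
  ring

end AGaux3


open AGaux AGaux2 AGaux3

/-- For the affine Gibbs model `K(x,p) = V(x) + β ∑_y W(x,y) p_y`, for every
`p ∈ 𝒫(𝒳)`,
`lim_{N→∞} F̃_N(p) = ∑_x (V(x) + β ∑_y W(x,y) p_y + log p_x) p_x − C`,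
where `C = inf_{q ∈ 𝒫(𝒳)} {∑ q_x log q_x + ∑ (V(x) + β ∑_y W(x,y) q_y) q_x}`
is a finite constant independent of `p`. -/
theorem affine_gibbs_relative_entropy_limit
    (d : ℕ) (hd : 2 ≤ d)
    (V : Fin d → ℝ) (W : Fin d → Fin d → ℝ) (β : ℝ) (hβ : 0 < β)
    (K : Fin d → (Fin d → ℝ) → ℝ)
    (hK : ∀ x : Fin d, ∀ q : Fin d → ℝ, K x q = V x + β * ∑ y, W x y * q y)
    (p : Fin d → ℝ) (hp : p ∈ stdSimplex ℝ (Fin d)) :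
    Tendsto (fun N : ℕ => tildeF K N p) atTop
      (nhds ((∑ x, (V x + β * (∑ y, W x y * p y) + Real.log (p x)) * p x)
        - sInf { v : ℝ | ∃ q ∈ stdSimplex ℝ (Fin d),
            v = ∑ x, q x * Real.log (q x)
              + ∑ x, (V x + β * ∑ y, W x y * q y) * q x })) := by
  have hd0 : 0 < d := by omega
  set G : (Fin d → ℝ) → ℝ := fun q =>
    (∑ a, q a * Real.log (q a)) + ∑ a, (V a + β * ∑ b, W a b * q b) * q a with hG
  have hGeq : ∀ q : Fin d → ℝ, G q = Ent q + Phi V W β q := by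
    intro q
    rw [hG]
    unfold Ent Phi
    simp only
    congr 1
    simp_rw [add_mul, Finset.sum_add_distrib]
    congr 1
    · exact Finset.sum_congr rfl fun a _ => mul_comm _ _
    · simp only [Finset.mul_sum, Finset.sum_mul]
      refine Finset.sum_congr rfl fun a _ => ?_
      refine Finset.sum_congr rfl fun b _ => ?_
      ring
  set S : Set ℝ := { v : ℝ | ∃ q ∈ stdSimplex ℝ (Fin d),
      v = ∑ x, q x * Real.log (q x) + ∑ x, (V x + β * ∑ y, W x y * q y) * q x } with hS
  set C : ℝ := sInf S with hC
  -- basic facts about S and C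
  have hGcont : Continuous G := by
    rw [hG]
    apply Continuous.add
    · apply continuous_finset_sum
      intro a _
      exact Real.continuous_mul_log.comp (continuous_apply a)
    · apply continuous_finset_sum
      intro a _
      apply Continuous.mul
      · apply Continuous.add continuous_const
        apply Continuous.mul continuous_const
        apply continuous_finset_sum
        intro b _
        exact Continuous.mul continuous_const (continuous_apply b)
      · exact continuous_apply a
  have hSimg : S = G '' stdSimplex ℝ (Fin d) := by
    ext v
    constructor
    · rintro ⟨q, hq, rfl⟩
      exact ⟨q, hq, rfl⟩
    · rintro ⟨q, hq, rfl⟩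
      exact ⟨q, hq, rfl⟩
  have hScompact : IsCompact S := by
    rw [hSimg]
    exact (isCompact_stdSimplex _ _).image hGcont
  have hSne : S.Nonempty := by
    refine ⟨G (fun _ => 1/(d:ℝ)), ⟨fun _ => 1/(d:ℝ), ⟨fun a => by positivity, ?_⟩, rfl⟩⟩
    rw [Finset.sum_const]
    simp only [Finset.card_univ, Fintype.card_fin, nsmul_eq_mul]
    have : (d:ℝ) ≠ 0 := by positivity
    field_simp
  have hSbdd : BddBelow S := hScompact.bddBelow
  have hCle : ∀ r ∈ stdSimplex ℝ (Fin d), C ≤ Ent r + Phi V W β r := by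
    intro r hr
    rw [← hGeq r]
    exact csInf_le hSbdd ⟨r, hr, rfl⟩
  -- existence of positive near-minimizers
  have hnear : ∀ ε : ℝ, 0 < ε → ∃ q : Fin d → ℝ,
      (∑ a, q a = 1) ∧ (∀ a, 0 < q a) ∧ Ent q + Phi V W β q < C + ε := by
    intro ε hε
    have : C < C + ε/2 := by linarith
    obtain ⟨v, hvS, hvlt⟩ := (csInf_lt_iff hSbdd hSne).1 this
    obtain ⟨q₀, hq₀, rfl⟩ := hvS
    have hGq₀ : G q₀ < C + ε/2 := hvlt
    set f : ℝ → ℝ := fun t => G (fun a => (1-t) * q₀ a + t * (1/(d:ℝ))) with hf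
    have hfcont : Continuous f := by
      apply hGcont.comp
      apply continuous_pi
      intro a
      apply Continuous.add
      · exact (continuous_const.sub continuous_id).mul continuous_const
      · exact continuous_id.mul continuous_const
    have hf0 : f 0 < C + ε := by
      have : (fun a => (1-(0:ℝ)) * q₀ a + (0:ℝ) * (1/(d:ℝ))) = q₀ := by
        funext a; ring
      rw [hf]
      simp only [this]
      exact hGq₀.trans_le (by linarith)
    have hev : ∀ᶠ t in nhds (0:ℝ), f t < C + ε :=
      (hfcont.tendsto 0).eventually_lt_const hf0
    have hev1 : ∀ᶠ t in nhds (0:ℝ), t < 1 :=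
      tendsto_id.eventually_lt_const (by norm_num : (0:ℝ) < 1)
    have : ∀ᶠ t in nhdsWithin (0:ℝ) (Set.Ioi 0), f t < C + ε ∧ t < 1 :=
      ((hev.and hev1).filter_mono nhdsWithin_le_nhds)
    obtain ⟨t, ht⟩ := (this.and self_mem_nhdsWithin).exists
    obtain ⟨⟨htf, ht1⟩, ht0⟩ := ht
    have ht0' : 0 < t := ht0
    refine ⟨fun a => (1-t) * q₀ a + t * (1/(d:ℝ)), ?_, ?_, ?_⟩
    · rw [Finset.sum_add_distrib, ← Finset.mul_sum, ← Finset.mul_sum, hq₀.2]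
      rw [Finset.sum_const]
      simp only [Finset.card_univ, Fintype.card_fin, nsmul_eq_mul]
      have : (d:ℝ) ≠ 0 := by positivity
      field_simp
      ring
    · intro a
      have h1 : 0 ≤ (1-t) * q₀ a := mul_nonneg (by linarith) (hq₀.1 a)
      have h2 : 0 < t * (1/(d:ℝ)) := by positivity
      linarith
    · rw [← hGeq]
      exact htf
  -- limit of (1/N) log Z
  have hlogZ : Tendsto (fun N : ℕ => (1/(N:ℝ)) * Real.log (Zed d K N)) atTop (nhds (-C)) := by
    rw [tendsto_order]
    constructor
    · -- lower bound side
      intro c hc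
      set ε := -C - c with hε
      have hεpos : 0 < ε := by rw [hε]; linarith
      obtain ⟨q, hq1, hqpos, hqlt⟩ := hnear (ε/2) (by linarith)
      set A := β * ((∑ a, ∑ b, q a * q b * W a b) - ∑ a, q a * W a a) with hA
      have hseq : Tendsto (fun N : ℕ => -(Ent q + Phi V W β q) + A * (1/(N:ℝ))) atTop
          (nhds (-(Ent q + Phi V W β q))) := by
        have h0 : Tendsto (fun N : ℕ => A * (1/(N:ℝ))) atTop (nhds 0) := by
          have := tendsto_one_div_atTop_nhds_zero_nat (𝕜 := ℝ)
          have := this.const_mul A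
          simpa using this
        have := (tendsto_const_nhds (x := -(Ent q + Phi V W β q))
          (f := atTop (α := ℕ))).add h0
        simpa using this
      have hclt : c < -(Ent q + Phi V W β q) := by linarith
      have hev := hseq.eventually_const_lt hclt
      have hev2 : ∀ᶠ N : ℕ in atTop, c < (1/(N:ℝ)) * Real.log (Zed d K N) := by
        filter_upwards [hev, Filter.eventually_ge_atTop 1] with N hN1 hN2
        have hNr : (0:ℝ) < N := by exact_mod_cast hN2
        have hZl := Z_lower hd0 hN2 V W β K hK q hq1 hqpos
        have : -(Ent q + Phi V W β q) + A * (1/(N:ℝ))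
            ≤ (1/(N:ℝ)) * Real.log (Zed d K N) := by
          have hmul := mul_le_mul_of_nonneg_left hZl (by positivity : (0:ℝ) ≤ 1/(N:ℝ))
          calc -(Ent q + Phi V W β q) + A * (1/(N:ℝ))
              = (1/(N:ℝ)) * (-((N:ℝ) * (Ent q + Phi V W β q)) + A) := by
                field_simp
            _ ≤ (1/(N:ℝ)) * Real.log (Zed d K N) := by
                rw [hA]
                exact hmul
        linarith
      exact hev2
    · -- upper bound side
      intro c hc
      have hCle' : ∀ r ∈ stdSimplex ℝ (Fin d), C ≤ Ent r + Phi V W β r := hCle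
      have hub : ∀ᶠ N : ℕ in atTop, (1/(N:ℝ)) * Real.log (Zed d K N)
          ≤ (d:ℝ) * (Real.log ((N:ℝ)+1) / (N:ℝ)) + (-C) := by
        filter_upwards [Filter.eventually_ge_atTop 1] with N hN1
        have hNr : (0:ℝ) < N := by exact_mod_cast hN1
        have hZu := Z_upper hN1 V W β K hK C hCle'
        have hZpos := Zed_pos hd0 K N
        have hlog : Real.log (Zed d K N) ≤ (d:ℝ) * Real.log ((N:ℝ)+1) + (-(N:ℝ)*C) := by
          calc Real.log (Zed d K N) ≤ Real.log (((N:ℝ)+1)^d * Real.exp (-(N:ℝ) * C)) :=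
                Real.log_le_log hZpos hZu
            _ = (d:ℝ) * Real.log ((N:ℝ)+1) + (-(N:ℝ)*C) := by
                rw [Real.log_mul (by positivity) (Real.exp_ne_zero _), Real.log_pow,
                  Real.log_exp]
        calc (1/(N:ℝ)) * Real.log (Zed d K N)
            ≤ (1/(N:ℝ)) * ((d:ℝ) * Real.log ((N:ℝ)+1) + (-(N:ℝ)*C)) :=
              mul_le_mul_of_nonneg_left hlog (by positivity)
          _ = (d:ℝ) * (Real.log ((N:ℝ)+1) / (N:ℝ)) + (-C) := by
              field_simp
      have htend : Tendsto (fun N : ℕ => (d:ℝ) * (Real.log ((N:ℝ)+1) / (N:ℝ)) + (-C))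
          atTop (nhds (-C)) := by
        have hlogdiv : Tendsto (fun x : ℝ => Real.log x / x) atTop (nhds 0) := by
          have := Real.tendsto_pow_log_div_mul_add_atTop 1 0 1 one_ne_zero
          simpa using this
        have hcomp : Tendsto (fun N : ℕ => Real.log ((N:ℝ)+1) / ((N:ℝ)+1)) atTop (nhds 0) := by
          apply hlogdiv.comp
          apply Filter.tendsto_atTop_add_const_right
          exact tendsto_natCast_atTop_atTop
        have hratio : Tendsto (fun N : ℕ => ((N:ℝ)+1) / (N:ℝ)) atTop (nhds 1) := by
          have h1 : Tendsto (fun N : ℕ => 1 + 1/(N:ℝ)) atTop (nhds 1) := by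
            have := tendsto_one_div_atTop_nhds_zero_nat (𝕜 := ℝ)
            have h := (tendsto_const_nhds (x := (1:ℝ)) (f := atTop (α := ℕ))).add this
            simpa using h
          apply h1.congr'
          filter_upwards [Filter.eventually_ge_atTop 1] with N hN
          have hNr : (0:ℝ) < N := by exact_mod_cast hN
          field_simp
        have hprod : Tendsto (fun N : ℕ => (Real.log ((N:ℝ)+1) / ((N:ℝ)+1)) * (((N:ℝ)+1) / (N:ℝ)))
            atTop (nhds 0) := by
          have := hcomp.mul hratio
          simpa using this
        have heq : ∀ᶠ N : ℕ in atTop,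
            (Real.log ((N:ℝ)+1) / ((N:ℝ)+1)) * (((N:ℝ)+1) / (N:ℝ))
              = Real.log ((N:ℝ)+1) / (N:ℝ) := by
          filter_upwards [Filter.eventually_ge_atTop 1] with N hN
          have hNr : (0:ℝ) < N := by exact_mod_cast hN
          field_simp
        have hfinal : Tendsto (fun N : ℕ => Real.log ((N:ℝ)+1) / (N:ℝ)) atTop (nhds 0) :=
          hprod.congr' heq
        have := (hfinal.const_mul (d:ℝ)).add (tendsto_const_nhds (x := -C))
        simpa using this
      have := htend.eventually_lt_const hc
      filter_upwards [this, hub] with N h1 h2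
      linarith
  -- assembly
  set SV := ∑ a, p a * V a with hSV
  set D := ∑ a, p a * W a a with hD
  set Q := ∑ a, ∑ b, p a * p b * W a b with hQ
  have htarget : (∑ x, (V x + β * (∑ y, W x y * p y) + Real.log (p x)) * p x) - C
      = (Ent p + SV + β * Q) + (-C) := by
    have : ∑ x, (V x + β * (∑ y, W x y * p y) + Real.log (p x)) * p x
        = G p := by
      rw [hG]
      simp only
      rw [← Finset.sum_add_distrib]
      refine Finset.sum_congr rfl fun a _ => ?_
      ring
    rw [this, hGeq p]
    unfold Phi Ent
    rw [hSV, hQ]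
    ring
  rw [htarget]
  have hmain : Tendsto (fun N : ℕ => (Ent p + SV + β * Q) + ((β * (D - Q)) * (1/(N:ℝ))
      + (1/(N:ℝ)) * Real.log (Zed d K N))) atTop (nhds ((Ent p + SV + β * Q) + (-C))) := by
    apply Tendsto.add tendsto_const_nhds
    have h1 : Tendsto (fun N : ℕ => (β * (D - Q)) * (1/(N:ℝ))) atTop (nhds 0) := by
      have := tendsto_one_div_atTop_nhds_zero_nat (𝕜 := ℝ)
      have := this.const_mul (β * (D - Q))
      simpa using this
    have := h1.add hlogZ
    simpa using this
  apply hmain.congr'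
  filter_upwards [Filter.eventually_ge_atTop 1] with N hN1
  have hNr : (0:ℝ) < N := by exact_mod_cast hN1
  unfold tildeF
  rw [relEnt_formula K hd0 p hp.1 hp.2]
  have hPlog : ∑ x : Fin N → Fin d, productMeasure p x * Real.log (productMeasure p x)
      = N * Ent p := entropy_tensor p hp.2
  have hPU : ∑ x : Fin N → Fin d, productMeasure p x * energyU K x
      = N * SV + β * D + β * ((N:ℝ) - 1) * Q := by
    rw [hSV, hD, hQ]
    exact expectation_energy hN1 V W β K hK p hp.2
  rw [hPlog, hPU]
  field_simp
  ring
end
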